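/- arXiv:1811.02332 — 2 statements merged into one kernel-verified Lean document; each statement's English description precedes it below -/
import Mathlib

section
/- For the path P_n with n ≥ 4 vertices, the eternal game chromatic number equals 4; in particular Bob has a winning strategy on P_4 when only 3 colors are available. -/
open SimpleGraph

/-- A state of the eternal vertex coloring game: the current (partial) coloring,
the set of vertices already chosen in the current round, and whose turn it is. -/
structure EGState (V : Type) (k : ℕ) where
  col : V → Option (Fin k)
  played : Finset V
  aliceTurn : Bool

variable {V : Type} [Fintype V] [DecidableEq V]

/-- A move (vertex `v`, color `c`) is legal: `v` has not yet been chosen this round,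
`c` differs from the current color of `v`, and `c` does not appear on a neighbor. -/
def EGLegal (G : SimpleGraph V) {k : ℕ} (s : EGState V k) (v : V) (c : Fin k) : Prop :=
  v ∉ s.played ∧ s.col v ≠ some c ∧ ∀ u, G.Adj v u → s.col u ≠ some c

/-- The state after (re-)coloring `v` with `c`; the round resets when every vertex
has been chosen once. -/
def EGStep {k : ℕ} (s : EGState V k) (v : V) (c : Fin k) : EGState V k where
  col := Function.update s.col v (some c)
  played := if insert v s.played = Finset.univ then ∅ else insert v s.played
  aliceTurn := !s.aliceTurn

/-- Alice can survive `n` further moves: on her turn she has some legal move after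
which she survives; on Bob's turn every vertex he might choose admits a legal color
(otherwise Bob wins by choosing a stuck vertex) and she survives every legal move of his. -/
def EGSurvives (G : SimpleGraph V) {k : ℕ} : ℕ → EGState V k → Prop
  | 0, _ => True
  | n + 1, s =>
      if s.aliceTurn then
        ∃ v c, EGLegal G s v c ∧ EGSurvives G n (EGStep s v c)
      else
        (∀ v, v ∉ s.played → ∃ c, EGLegal G s v c) ∧
          ∀ v c, EGLegal G s v c → EGSurvives G n (EGStep s v c)

/-- The initial state: all vertices uncolored, Alice to move. -/
def EGInit (V : Type) (k : ℕ) : EGState V k := ⟨fun _ => none, ∅, true⟩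

/-- Alice wins the eternal vertex coloring game on `G` with `k` colors
(the game is finitely branching, so winning is equivalent to surviving forever). -/
def AliceWinsEG (G : SimpleGraph V) (k : ℕ) : Prop :=
  ∀ n, EGSurvives G n (EGInit V k)

/-- The eternal game chromatic number `χ_g^∞(G)`. -/
noncomputable def eternalGameChromatic (G : SimpleGraph V) : ℕ :=
  sInf {k | AliceWinsEG G k}

section Dec
variable {V : Type} [Fintype V] [DecidableEq V]

instance EGLegal.dec (G : SimpleGraph V) [DecidableRel G.Adj] {k : ℕ} (s : EGState V k)
    (v : V) (c : Fin k) : Decidable (EGLegal G s v c) := by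
  unfold EGLegal; infer_instance

instance EGSurvives.dec (G : SimpleGraph V) [DecidableRel G.Adj] {k : ℕ} :
    ∀ (n : ℕ) (s : EGState V k), Decidable (EGSurvives G n s)
  | 0, _ => isTrue trivial
  | n+1, s =>
    have : ∀ s' : EGState V k, Decidable (EGSurvives G n s') := EGSurvives.dec G n
    decidable_of_iff
      (if s.aliceTurn then ∃ v c, EGLegal G s v c ∧ EGSurvives G n (EGStep s v c)
       else (∀ v, v ∉ s.played → ∃ c, EGLegal G s v c) ∧
          ∀ v c, EGLegal G s v c → EGSurvives G n (EGStep s v c)) Iff.rfl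

instance pathGraph.decAdj (n : ℕ) : DecidableRel (pathGraph n).Adj := fun u v =>
  decidable_of_iff _ (pathGraph_adj).symm

end Dec

section Helpers
variable {V : Type} [Fintype V] [DecidableEq V]

/-- value of a coloring at a natural index, `none` out of range -/
def optAt {n k : ℕ} (col : Fin n → Option (Fin k)) (i : ℕ) : Option (Fin k) :=
  if h : i < n then col ⟨i, h⟩ else none

lemma avoid2 : ∀ (a b : Option (Fin 3)), ∃ x : Fin 3, some x ≠ a ∧ some x ≠ b := by decide

lemma avoid3four : ∀ (a b c : Option (Fin 4)), ∃ x : Fin 4,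
    some x ≠ a ∧ some x ≠ b ∧ some x ≠ c := by decide

lemma adj_col_cases {n k : ℕ} (col : Fin n → Option (Fin k)) {v u : Fin n}
    (h : (pathGraph n).Adj v u) :
    col u = optAt col (v.val - 1) ∨ col u = optAt col (v.val + 1) := by
  rcases pathGraph_adj.mp h with h1 | h1
  · right
    have hlt : (v : ℕ) + 1 < n := by have := u.isLt; omega
    have : u = ⟨(v : ℕ) + 1, hlt⟩ := by apply Fin.ext; simpa using h1.symm
    rw [this, optAt, dif_pos hlt]
  · left
    have hlt : (v : ℕ) - 1 < n := by have := v.isLt; omega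
    have : u = ⟨(v : ℕ) - 1, hlt⟩ := by apply Fin.ext; simp; omega
    rw [this, optAt, dif_pos hlt]

lemma exists_legal_four {n : ℕ} (s : EGState (Fin n) 4) (v : Fin n) (hv : v ∉ s.played) :
    ∃ c, EGLegal (pathGraph n) s v c := by
  obtain ⟨x, hx1, hx2, hx3⟩ := avoid3four (s.col v) (optAt s.col (v.val - 1))
    (optAt s.col (v.val + 1))
  refine ⟨x, hv, fun h => hx1 h.symm, fun u hu => ?_⟩
  rcases adj_col_cases s.col hu with h | h <;> rw [h] <;> [exact fun h => hx2 h.symm;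
    exact fun h => hx3 h.symm]

lemma exists_legal_three {n : ℕ} (s : EGState (Fin n) 3) (v : Fin n) (hv : v ∉ s.played)
    (hcol : s.col v = none) : ∃ c, EGLegal (pathGraph n) s v c := by
  obtain ⟨x, hx2, hx3⟩ := avoid2 (optAt s.col (v.val - 1)) (optAt s.col (v.val + 1))
  refine ⟨x, hv, by simp [hcol], fun u hu => ?_⟩
  rcases adj_col_cases s.col hu with h | h <;> rw [h] <;> [exact fun h => hx2 h.symm;
    exact fun h => hx3 h.symm]

lemma step_played_ne_univ {n k : ℕ} (hn : 1 ≤ n) (s : EGState (Fin n) k) (v : Fin n)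
    (c : Fin k) : (EGStep s v c).played ≠ Finset.univ := by
  have h0 : (Finset.univ : Finset (Fin n)).Nonempty := by
    refine ⟨⟨0, by omega⟩, Finset.mem_univ _⟩
  simp only [EGStep]
  split
  · exact fun h => h0.ne_empty (by rw [h])
  · assumption

lemma alice_wins_four {n : ℕ} (hn : 1 ≤ n) : AliceWinsEG (pathGraph n) 4 := by
  have key : ∀ m (s : EGState (Fin n) 4), s.played ≠ Finset.univ →
      EGSurvives (pathGraph n) m s := by
    intro m
    induction m with
    | zero => intro s _; trivial
    | succ m ih =>
      intro s hne
      by_cases ht : s.aliceTurn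
      · simp only [EGSurvives, ht, if_true]
        obtain ⟨v, hv⟩ : ∃ v, v ∉ s.played := by
          by_contra h
          push_neg at h
          exact hne (Finset.eq_univ_iff_forall.2 h)
        obtain ⟨c, hc⟩ := exists_legal_four s v hv
        exact ⟨v, c, hc, ih _ (step_played_ne_univ hn s v c)⟩
      · simp only [EGSurvives, ht, if_false]
        exact ⟨fun v hv => exists_legal_four s v hv,
          fun v c _ => ih _ (step_played_ne_univ hn s v c)⟩
  intro m
  apply key
  simp only [EGInit]
  intro h
  have h0 : (⟨0, by omega⟩ : Fin n) ∈ (∅ : Finset (Fin n)) := by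
    rw [h]; exact Finset.mem_univ _
  simp at h0
end Helpers
section Small
variable {V : Type} [Fintype V] [DecidableEq V]

lemma surv_alice {G : SimpleGraph V} {k m : ℕ} {s : EGState V k} (h : s.aliceTurn = true) :
    EGSurvives G (m+1) s ↔ ∃ v c, EGLegal G s v c ∧ EGSurvives G m (EGStep s v c) := by
  simp [EGSurvives, h]

lemma surv_bob {G : SimpleGraph V} {k m : ℕ} {s : EGState V k} (h : s.aliceTurn = false) :
    EGSurvives G (m+1) s ↔ ((∀ v, v ∉ s.played → ∃ c, EGLegal G s v c) ∧
      ∀ v c, EGLegal G s v c → EGSurvives G m (EGStep s v c)) := by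
  simp [EGSurvives, h]

lemma not_mem_step_played {k : ℕ} {s : EGState V k} {v : V} {c : Fin k} {u : V}
    (hu : u ≠ v) (hmem : u ∉ s.played) : u ∉ (EGStep s v c).played := by
  simp only [EGStep]
  split
  · simp
  · simp [hmem, hu]

lemma ne_univ_of_not_mem {s : Finset V} {u : V} (hu : u ∉ s) : s ≠ Finset.univ :=
  fun h => hu (h ▸ Finset.mem_univ u)

lemma step_played_eq {k : ℕ} (s : EGState V k) (v : V) (c : Fin k)
    (hne : insert v s.played ≠ Finset.univ) :
    (EGStep s v c).played = insert v s.played := by simp [EGStep, hne]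

lemma step_turn {k : ℕ} (s : EGState V k) (v : V) (c : Fin k) :
    (EGStep s v c).aliceTurn = !s.aliceTurn := rfl

lemma step_col {k : ℕ} (s : EGState V k) (v : V) (c : Fin k) :
    (EGStep s v c).col = Function.update s.col v (some c) := rfl

lemma init_turn (k : ℕ) : (EGInit V k).aliceTurn = true := rfl

lemma bob_wins_zero {n : ℕ} : ¬ EGSurvives (pathGraph n) 1 (EGInit (Fin n) 0) := by
  intro h
  obtain ⟨v, c, _⟩ := (surv_alice rfl).1 h
  exact c.elim0

lemma path_adj {n : ℕ} {u v : Fin n} (h : (u : ℕ) + 1 = (v : ℕ) ∨ (v : ℕ) + 1 = (u : ℕ)) :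
    (pathGraph n).Adj u v := pathGraph_adj.mpr h

lemma bob_wins_one {n : ℕ} (hn : 2 ≤ n) : ¬ EGSurvives (pathGraph n) 2 (EGInit (Fin n) 1) := by
  intro h
  obtain ⟨v, c, hleg, h1⟩ := (surv_alice rfl).1 h
  obtain ⟨check, -⟩ := (surv_bob rfl).1 h1
  -- a neighbour of v
  have hvlt := v.isLt
  set u : Fin n := if h' : (v : ℕ) + 1 < n then ⟨(v : ℕ) + 1, h'⟩
    else ⟨(v : ℕ) - 1, by omega⟩ with hu
  have huv : (u : ℕ) + 1 = (v : ℕ) ∨ (v : ℕ) + 1 = (u : ℕ) := by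
    rw [hu]; split <;> simp <;> omega
  have hadj : (pathGraph n).Adj u v := path_adj huv
  have hune : u ≠ v := fun h => by rw [h] at huv; omega
  obtain ⟨c', hleg'⟩ := check u (not_mem_step_played hune (by simp [EGInit]))
  apply hleg'.2.2 v hadj
  have : c' = c := by omega
  rw [this, step_col]
  simp [EGInit]

lemma cover2 : ∀ (e c d : Fin 2), c ≠ d → e = c ∨ e = d := by decide

lemma two_trap {n : ℕ} (s2 : EGState (Fin n) 2) (m v w : Fin n)
    (hturn : s2.aliceTurn = true)
    (hadjv : (pathGraph n).Adj m v) (hadjw : (pathGraph n).Adj m w)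
    {c d : Fin 2} (hcd : c ≠ d) (hcv : s2.col v = some c) (hcw : s2.col w = some d)
    (hmv : v ∈ s2.played) (hmw : w ∈ s2.played) (hm : m ∉ s2.played) :
    ¬ EGSurvives (pathGraph n) 2 s2 := by
  intro h
  obtain ⟨x, e, hleg, h1⟩ := (surv_alice hturn).1 h
  obtain ⟨check, -⟩ := (surv_bob (by rw [step_turn, hturn]; rfl)).1 h1
  have hxv : x ≠ v := fun h => hleg.1 (h ▸ hmv)
  have hxw : x ≠ w := fun h => hleg.1 (h ▸ hmw)
  have hxm : x ≠ m := by
    intro h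
    subst h
    rcases cover2 e c d hcd with rfl | rfl
    · exact hleg.2.2 v hadjv hcv
    · exact hleg.2.2 w hadjw hcw
  obtain ⟨e', hleg'⟩ := check m (not_mem_step_played hxm.symm hm)
  have hv' : (EGStep s2 x e).col v = some c := by
    rw [step_col, Function.update_of_ne hxv.symm, hcv]
  have hw' : (EGStep s2 x e).col w = some d := by
    rw [step_col, Function.update_of_ne hxw.symm, hcw]
  rcases cover2 e' c d hcd with rfl | rfl
  · exact hleg'.2.2 v hadjv hv'
  · exact hleg'.2.2 w hadjw hw'

lemma bob_wins_two {n : ℕ} (hn : 4 ≤ n) : ¬ EGSurvives (pathGraph n) 4 (EGInit (Fin n) 2) := by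
  intro h
  obtain ⟨v, c, hleg, h1⟩ := (surv_alice rfl).1 h
  obtain ⟨-, hall⟩ := (surv_bob rfl).1 h1
  have hvlt := v.isLt
  -- Bob plays at distance two from `v`
  set w : Fin n := if h' : (v : ℕ) + 2 < n then ⟨(v : ℕ) + 2, h'⟩
    else ⟨(v : ℕ) - 2, by omega⟩ with hwdef
  set m : Fin n := if h' : (v : ℕ) + 2 < n then ⟨(v : ℕ) + 1, by omega⟩
    else ⟨(v : ℕ) - 1, by omega⟩ with hmdef
  have hw2 : ((w : ℕ) + 2 = v ∨ (v : ℕ) + 2 = w) ∧ ((m : ℕ) + 1 = v ∨ (v : ℕ) + 1 = m)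
      ∧ (((m : ℕ) + 1 = w) ∨ ((w : ℕ) + 1 = m)) := by
    rw [hwdef, hmdef]; split <;> simp <;> omega
  obtain ⟨hw2, hm1, hmw⟩ := hw2
  have hwv : w ≠ v := fun h => by rw [h] at hw2; omega
  obtain ⟨d, hd⟩ : ∃ d : Fin 2, d ≠ c := by
    rcases cover2 c 0 1 (by decide) with rfl | rfl
    exacts [⟨1, by decide⟩, ⟨0, by decide⟩]
  have s1colv : (EGStep (EGInit (Fin n) 2) v c).col v = some c := by
    rw [step_col]; simp
  have hlegw : EGLegal (pathGraph n) (EGStep (EGInit (Fin n) 2) v c) w d := by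
    refine ⟨not_mem_step_played hwv (by simp [EGInit]), ?_, ?_⟩
    · rw [step_col, Function.update_of_ne hwv]; simp [EGInit]
    · intro u hu
      have := pathGraph_adj.mp hu
      have huv : u ≠ v := by
        intro h; rw [h] at this; omega
      rw [step_col, Function.update_of_ne huv]; simp [EGInit]
  have h2 := hall w d hlegw
  set s2 := EGStep (EGStep (EGInit (Fin n) 2) v c) w d with hs2
  have hmvne : m ≠ v := fun h => by rw [h] at hm1; omega
  have hmwne : m ≠ w := fun h => by rw [h] at hmw; omega
  have hpl1 : (EGStep (EGInit (Fin n) 2) v c).played = {v} := by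
    rw [step_played_eq]
    · simp [EGInit]
    · exact ne_univ_of_not_mem (s := insert v (EGInit (Fin n) 2).played)
        (u := w) (by simp [EGInit, hwv])
  have hpl2 : s2.played = {w, v} := by
    rw [hs2, step_played_eq, hpl1]
    rw [hpl1]
    exact ne_univ_of_not_mem (u := m) (by simp [hmvne, hmwne])
  refine two_trap s2 m v w rfl (path_adj ?_) (path_adj ?_) hd.symm ?_ ?_ ?_ ?_ ?_ h2
  · omega
  · omega
  · rw [hs2, step_col, Function.update_of_ne hwv.symm, s1colv]
  · rw [hs2, step_col]; simp
  · rw [hpl2]; simp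
  · rw [hpl2]; simp
  · rw [hpl2]; simp [hmvne, hmwne]
end Small
section Three
variable {V : Type} [Fintype V] [DecidableEq V]

/-- vertex `m` is colored and has two neighbours so that the three colors are distinct -/
def StuckAt (n : ℕ) (col : Fin n → Option (Fin 3)) (m : Fin n) : Prop :=
  ∃ (u w : Fin n) (a b c : Fin 3), (pathGraph n).Adj m u ∧ (pathGraph n).Adj m w ∧
    col m = some a ∧ col u = some b ∧ col w = some c ∧ a ≠ b ∧ a ≠ c ∧ b ≠ c

lemma cover3 : ∀ (x a b c : Fin 3), a ≠ b → a ≠ c → b ≠ c → x = a ∨ x = b ∨ x = c := by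
  decide

lemma StuckAt.no_legal {n : ℕ} {s : EGState (Fin n) 3} {m : Fin n}
    (h : StuckAt n s.col m) (c : Fin 3) : ¬ EGLegal (pathGraph n) s m c := by
  obtain ⟨u, w, a, b, cc, hu, hw, hm, hcu, hcw, hab, hac, hbc⟩ := h
  rintro ⟨-, h1, h2⟩
  rcases cover3 c a b cc hab hac hbc with rfl | rfl | rfl
  · exact h1 hm
  · exact h2 u hu hcu
  · exact h2 w hw hcw

lemma StuckAt.update {n : ℕ} {col : Fin n → Option (Fin 3)} {m : Fin n}
    (h : StuckAt n col m) (v : Fin n) (c : Fin 3) (hvm : v ≠ m)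
    (hadj : ¬ (pathGraph n).Adj m v) : StuckAt n (Function.update col v (some c)) m := by
  obtain ⟨u, w, a, b, cc, hu, hw, hm, hcu, hcw, hab, hac, hbc⟩ := h
  have huv : u ≠ v := fun h => hadj (h ▸ hu)
  have hwv : w ≠ v := fun h => hadj (h ▸ hw)
  exact ⟨u, w, a, b, cc, hu, hw,
    by rw [Function.update_of_ne (Ne.symm hvm), hm],
    by rw [Function.update_of_ne huv, hcu],
    by rw [Function.update_of_ne hwv, hcw], hab, hac, hbc⟩

lemma bob_check_fail {n : ℕ} (s : EGState (Fin n) 3) (m : Fin n)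
    (hturn : s.aliceTurn = false) (hstuck : StuckAt n s.col m) (hm : m ∉ s.played) :
    ∀ j, ¬ EGSurvives (pathGraph n) (j+1) s := by
  intro j hs
  obtain ⟨check, -⟩ := (surv_bob hturn).1 hs
  obtain ⟨c, hc⟩ := check m hm
  exact hstuck.no_legal c hc

lemma alice_two_stuck {n : ℕ} (s : EGState (Fin n) 3) (m1 m2 : Fin n)
    (hturn : s.aliceTurn = true) (h12 : (m1 : ℕ) + 1 = (m2 : ℕ))
    (h1 : StuckAt n s.col m1) (h2 : StuckAt n s.col m2)
    (hp1 : m1 ∉ s.played) (hp2 : m2 ∉ s.played) :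
    ∀ j, ¬ EGSurvives (pathGraph n) (j+2) s := by
  intro j hs
  obtain ⟨x, e, hleg, hs'⟩ := (surv_alice hturn).1 hs
  have hxm1 : x ≠ m1 := fun h => h1.no_legal e (h ▸ hleg)
  have hxm2 : x ≠ m2 := fun h => h2.no_legal e (h ▸ hleg)
  have hturn' : (EGStep s x e).aliceTurn = false := by rw [step_turn, hturn]; rfl
  by_cases hax : (pathGraph n).Adj m1 x
  · -- x is the left neighbour of m1; m2 is untouched
    have hx1 := pathGraph_adj.mp hax
    have hnadj : ¬ (pathGraph n).Adj m2 x := by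
      intro h
      have := pathGraph_adj.mp h
      have hxm1' : (x : ℕ) ≠ (m1 : ℕ) := fun h => hxm1 (Fin.ext h)
      have hxm2' : (x : ℕ) ≠ (m2 : ℕ) := fun h => hxm2 (Fin.ext h)
      omega
    exact bob_check_fail (EGStep s x e) m2 hturn'
      (h2.update x e hxm2 hnadj) (not_mem_step_played hxm2.symm hp2) j hs'
  · exact bob_check_fail (EGStep s x e) m1 hturn'
      (h1.update x e hxm1 hax) (not_mem_step_played hxm1.symm hp1) j hs'

/-- The invariant during round 1 once Bob has planted his trap: the coloring is
proper, the played set is exactly the support, and positions `p` and `p+3` share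
the color `a`. -/
structure Phase1 (n p : ℕ) (a : Fin 3) (s : EGState (Fin n) 3) : Prop where
  hp : p + 3 < n
  prop : ∀ v u c, (pathGraph n).Adj v u → s.col v = some c → s.col u ≠ some c
  supp : ∀ v, v ∈ s.played ↔ s.col v ≠ none
  trap0 : optAt s.col p = some a
  trap3 : optAt s.col (p+3) = some a

lemma full_stuck {n p : ℕ} {a : Fin 3} (hp : p + 3 < n) (col : Fin n → Option (Fin 3))
    (hprop : ∀ v u c, (pathGraph n).Adj v u → col v = some c → col u ≠ some c)
    (h0 : optAt col p = some a) (h3 : optAt col (p+3) = some a)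
    (hfull : ∀ v, col v ≠ none) :
    ∀ m : Fin n, (m : ℕ) = p + 1 ∨ (m : ℕ) = p + 2 → StuckAt n col m := by
  have hv0 : col ⟨p, by omega⟩ = some a := by
    rw [optAt, dif_pos (by omega : p < n)] at h0; exact h0
  have hv3 : col ⟨p+3, hp⟩ = some a := by
    rw [optAt, dif_pos hp] at h3; exact h3
  obtain ⟨b, hb⟩ : ∃ b, col ⟨p+1, by omega⟩ = some b :=
    Option.ne_none_iff_exists'.mp (hfull _)
  obtain ⟨c, hc⟩ : ∃ c, col ⟨p+2, by omega⟩ = some c :=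
    Option.ne_none_iff_exists'.mp (hfull _)
  have adj01 : (pathGraph n).Adj ⟨p+1, by omega⟩ ⟨p, by omega⟩ := path_adj (by simp)
  have adj12 : (pathGraph n).Adj ⟨p+1, by omega⟩ ⟨p+2, by omega⟩ := path_adj (by simp)
  have adj23 : (pathGraph n).Adj ⟨p+2, by omega⟩ ⟨p+3, hp⟩ := path_adj (by simp)
  have hba : b ≠ a := fun h => hprop _ _ b adj01 hb (by rw [h]; exact hv0)
  have hca : c ≠ a := fun h => hprop _ _ c adj23 hc (by rw [h]; exact hv3)
  have hbc : b ≠ c := fun h => hprop _ _ b adj12 hb (by rw [h]; exact hc)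
  rintro m (hm | hm)
  · have : m = ⟨p+1, by omega⟩ := Fin.ext hm
    rw [this]
    exact ⟨_, _, b, a, c, adj01, adj12, hb, hv0, hc, hba, hbc, fun h => hca h.symm⟩
  · have : m = ⟨p+2, by omega⟩ := Fin.ext hm
    rw [this]
    exact ⟨_, _, c, b, a, (pathGraph n).adj_symm adj12, adj23, hc, hb, hv3,
      fun h => hbc h.symm, hca, hba⟩

lemma update_proper {n k : ℕ} {col : Fin n → Option (Fin k)}
    (hprop : ∀ v u c, (pathGraph n).Adj v u → col v = some c → col u ≠ some c)
    {v : Fin n} {c : Fin k} (hleg : ∀ u, (pathGraph n).Adj v u → col u ≠ some c) :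
    ∀ x u e, (pathGraph n).Adj x u → Function.update col v (some c) x = some e →
      Function.update col v (some c) u ≠ some e := by
  intro x u e hadj hx hu
  have hxu : x ≠ u := (pathGraph n).ne_of_adj hadj
  by_cases hxv : x = v
  · subst hxv
    rw [Function.update_self] at hx
    rw [Function.update_of_ne (Ne.symm hxu)] at hu
    exact hleg u hadj (hx ▸ hu)
  · rw [Function.update_of_ne hxv] at hx
    by_cases huv : u = v
    · subst huv
      rw [Function.update_self] at hu
      exact hleg x ((pathGraph n).adj_symm hadj) (hu ▸ hx)
    · rw [Function.update_of_ne huv] at hu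
      exact hprop x u e hadj hx hu

lemma phase1_step {n p : ℕ} {a : Fin 3} {s : EGState (Fin n) 3}
    (h : Phase1 n p a s) (v : Fin n) (c : Fin 3)
    (hleg : EGLegal (pathGraph n) s v c) (hne : insert v s.played ≠ Finset.univ) :
    Phase1 n p a (EGStep s v c) := by
  have hvcol : s.col v = none := not_not.mp (fun hcc => hleg.1 ((h.supp v).mpr hcc))
  have hplt : p < n := by have := h.hp; omega
  have hp3lt : p + 3 < n := h.hp
  have hcp : s.col ⟨p, hplt⟩ = some a := by
    have h0 := h.trap0; rwa [optAt, dif_pos hplt] at h0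
  have hcp3 : s.col ⟨p+3, hp3lt⟩ = some a := by
    have h0 := h.trap3; rwa [optAt, dif_pos hp3lt] at h0
  have hvp : (⟨p, hplt⟩ : Fin n) ≠ v := fun hv => by
    rw [← hv, hcp] at hvcol; cases hvcol
  have hvp3 : (⟨p+3, hp3lt⟩ : Fin n) ≠ v := fun hv => by
    rw [← hv, hcp3] at hvcol; cases hvcol
  refine ⟨h.hp, update_proper h.prop hleg.2.2, ?_, ?_, ?_⟩
  · intro x
    rw [step_played_eq _ _ _ hne, step_col, Finset.mem_insert]
    by_cases hx : x = v
    · subst hx; simp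
    · rw [Function.update_of_ne hx, ← h.supp]
      simp [hx]
  · rw [optAt, dif_pos hplt, step_col, Function.update_of_ne hvp, hcp]
  · rw [optAt, dif_pos hp3lt, step_col, Function.update_of_ne hvp3, hcp3]

lemma uc_step {n k : ℕ} (s : EGState (Fin n) k) (v : Fin n) (c : Fin k) :
    Finset.filter (fun x => (EGStep s v c).col x = none) Finset.univ
      = (Finset.filter (fun x => s.col x = none) Finset.univ).erase v := by
  ext x
  by_cases hx : x = v
  · subst hx; rw [Finset.mem_filter, Finset.mem_erase, Finset.mem_filter]; simp [step_col]
  · rw [Finset.mem_filter, Finset.mem_erase, Finset.mem_filter]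
    simp [step_col, Function.update_of_ne hx, hx]

lemma phase1_wins {n p : ℕ} {a : Fin 3} :
    ∀ (r : ℕ) (s : EGState (Fin n) 3), Phase1 n p a s →
    (Finset.univ.filter (fun v => s.col v = none)).card = r + 1 →
    ¬ EGSurvives (pathGraph n) (r + 3) s := by
  intro r
  induction r with
  | zero =>
    intro s hP hcard hs
    -- exactly one uncolored vertex remains; the next move finishes the round
    obtain ⟨y, hy⟩ := Finset.card_eq_one.mp hcard
    have hyc : s.col y = none := by
      have : y ∈ Finset.univ.filter (fun v => s.col v = none) := by rw [hy]; simp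
      simpa using this
    have key : ∀ v (c : Fin 3), EGLegal (pathGraph n) s v c →
        ¬ EGSurvives (pathGraph n) 2 (EGStep s v c) := by
      intro v c hleg
      have hvcol : s.col v = none := not_not.mp (fun hcc => hleg.1 ((hP.supp v).mpr hcc))
      have hvy : v = y := by
        have : v ∈ Finset.univ.filter (fun x => s.col x = none) := by simp [hvcol]
        rw [hy] at this; simpa using this
      have hreset : insert v s.played = Finset.univ := by
        apply Finset.eq_univ_iff_forall.mpr
        intro x
        rcases eq_or_ne x v with rfl | hxv
        · simp
        · have hxc : s.col x ≠ none := by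
            intro hc
            have : x ∈ Finset.univ.filter (fun z => s.col z = none) := by simp [hc]
            rw [hy] at this
            exact hxv (by simpa [hvy] using this)
          exact Finset.mem_insert_of_mem ((hP.supp x).mpr hxc)
      have hpl' : (EGStep s v c).played = ∅ := by simp [EGStep, hreset]
      have hfull : ∀ x, (EGStep s v c).col x ≠ none := by
        intro x
        rcases eq_or_ne x v with rfl | hxv
        · simp [step_col]
        · rw [step_col, Function.update_of_ne hxv]
          intro hc
          have : x ∈ Finset.univ.filter (fun z => s.col z = none) := by simp [hc]
          rw [hy] at this
          exact hxv (by simpa [hvy] using this)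
      have hprop' := update_proper hP.prop hleg.2.2
      have hplt : p < n := by have := hP.hp; omega
      have hvcolp : (⟨p, hplt⟩ : Fin n) ≠ v := by
        intro hv
        have h0 := hP.trap0
        rw [optAt, dif_pos hplt, hv, hvcol] at h0
        cases h0
      have hvcolp3 : (⟨p+3, hP.hp⟩ : Fin n) ≠ v := by
        intro hv
        have h0 := hP.trap3
        rw [optAt, dif_pos hP.hp, hv, hvcol] at h0
        cases h0
      have h0' : optAt (EGStep s v c).col p = some a := by
        rw [optAt, dif_pos hplt, step_col, Function.update_of_ne hvcolp]
        have h0 := hP.trap0; rwa [optAt, dif_pos hplt] at h0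
      have h3' : optAt (EGStep s v c).col (p+3) = some a := by
        rw [optAt, dif_pos hP.hp, step_col, Function.update_of_ne hvcolp3]
        have h0 := hP.trap3; rwa [optAt, dif_pos hP.hp] at h0
      have hstuck := full_stuck hP.hp (EGStep s v c).col
        (by rw [step_col] at *; exact hprop') h0' h3' hfull
      have hs1 := hstuck ⟨p+1, by have := hP.hp; omega⟩ (Or.inl rfl)
      have hs2 := hstuck ⟨p+2, by have := hP.hp; omega⟩ (Or.inr rfl)
      intro hsurv
      rcases Bool.eq_false_or_eq_true (EGStep s v c).aliceTurn with ht | ht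
      · exact alice_two_stuck _ _ _ ht rfl hs1 hs2
          (by rw [hpl']; simp) (by rw [hpl']; simp) 0 hsurv
      · exact bob_check_fail _ _ ht hs1 (by rw [hpl']; simp) 1 hsurv
    rcases Bool.eq_false_or_eq_true s.aliceTurn with ht | ht
    · obtain ⟨v, c, hleg, hsurv⟩ := (surv_alice ht).1 hs
      exact key v c hleg hsurv
    · obtain ⟨-, hall⟩ := (surv_bob ht).1 hs
      have hyp : y ∉ s.played := fun hc => (by rw [hP.supp] at hc; exact hc hyc)
      obtain ⟨c, hc⟩ := exists_legal_three s y hyp hyc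
      exact key y c hc (hall y c hc)
  | succ r ih =>
    intro s hP hcard hs
    have key : ∀ v (c : Fin 3), EGLegal (pathGraph n) s v c →
        ¬ EGSurvives (pathGraph n) (r + 3) (EGStep s v c) := by
      intro v c hleg
      have hvcol : s.col v = none := not_not.mp (fun hcc => hleg.1 ((hP.supp v).mpr hcc))
      have hvU : v ∈ Finset.univ.filter (fun x => s.col x = none) := by simp [hvcol]
      obtain ⟨z, hzU, hzv⟩ : ∃ z ∈ Finset.univ.filter (fun x => s.col x = none), z ≠ v :=
        Finset.exists_mem_ne (by omega) v
      have hzc : s.col z = none := by simpa using hzU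
      have hne : insert v s.played ≠ Finset.univ := by
        apply ne_univ_of_not_mem (u := z)
        simp only [Finset.mem_insert]
        rintro (rfl | hz)
        · exact hzv rfl
        · rw [hP.supp] at hz; exact hz hzc
      have hP' := phase1_step hP v c hleg hne
      have hcard' : (Finset.univ.filter (fun x => (EGStep s v c).col x = none)).card
          = r + 1 := by
        rw [uc_step, Finset.card_erase_of_mem hvU, hcard]
        omega

      exact ih (EGStep s v c) hP' hcard'
    rcases Bool.eq_false_or_eq_true s.aliceTurn with ht | ht
    · obtain ⟨v, c, hleg, hsurv⟩ := (surv_alice ht).1 hs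
      exact key v c hleg hsurv
    · obtain ⟨-, hall⟩ := (surv_bob ht).1 hs
      obtain ⟨v, hvU⟩ := Finset.card_pos.mp
        (by rw [hcard]; omega : 0 < (Finset.univ.filter (fun x => s.col x = none)).card)
      have hvc : s.col v = none := by simpa using hvU
      have hvp : v ∉ s.played := fun hc => (by rw [hP.supp] at hc; exact hc hvc)
      obtain ⟨c, hc⟩ := exists_legal_three s v hvp hvc
      exact key v c hc (hall v c hc)

end Three
section Final
lemma exists_third {n : ℕ} (hn : 3 ≤ n) (u w : Fin n) : ∃ z : Fin n, z ≠ u ∧ z ≠ w := by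
  by_contra h
  push_neg at h
  have hsub : (Finset.univ : Finset (Fin n)) ⊆ {u, w} := by
    intro z _
    rcases eq_or_ne z u with rfl | hz
    · simp
    · simp [h z hz]
  have := Finset.card_le_card hsub
  have h2 : ({u, w} : Finset (Fin n)).card ≤ 2 := Finset.card_insert_le _ _ |>.trans (by simp)
  simp [Finset.card_univ] at this
  omega

lemma bob_wins_three {n : ℕ} (hn : 6 ≤ n) :
    ¬ EGSurvives (pathGraph n) (n + 2) (EGInit (Fin n) 3) := by
  intro hs
  rw [show n + 2 = (n + 1) + 1 from rfl] at hs
  obtain ⟨u, a, hlegu, hs1⟩ := (surv_alice rfl).1 hs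
  set s1 := EGStep (EGInit (Fin n) 3) u a with hs1def
  rw [show n + 1 = n + 1 from rfl] at hs1
  obtain ⟨-, hall⟩ := (surv_bob rfl).1 hs1
  have hult := u.isLt
  obtain ⟨p, hp3, hpu⟩ : ∃ p : ℕ, p + 3 < n ∧ ((u : ℕ) = p ∨ (u : ℕ) = p + 3) := by
    by_cases h : (u : ℕ) + 3 < n
    · exact ⟨u, h, Or.inl rfl⟩
    · exact ⟨(u : ℕ) - 3, by omega, Or.inr (by omega)⟩
  set w : Fin n := if (u : ℕ) = p then ⟨p + 3, hp3⟩ else ⟨p, by omega⟩ with hwdef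
  have hw : ((u : ℕ) = p ∧ (w : ℕ) = p + 3) ∨ ((u : ℕ) = p + 3 ∧ (w : ℕ) = p) := by
    rw [hwdef]
    rcases hpu with h | h <;> simp [h] <;> omega
  have hwu : w ≠ u := by
    intro h
    have : (w : ℕ) = (u : ℕ) := by rw [h]
    omega
  have hs1col : ∀ x : Fin n, s1.col x = if x = u then some a else none := by
    intro x
    rcases eq_or_ne x u with rfl | hx
    · simp [hs1def, step_col]
    · simp [hs1def, step_col, Function.update_of_ne hx, hx, EGInit]
  have hs1pl : s1.played = {u} := by
    rw [hs1def, step_played_eq]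
    · simp [EGInit]
    · apply ne_univ_of_not_mem (u := w)
      simp [EGInit, hwu]
  have hlegw : EGLegal (pathGraph n) s1 w a := by
    refine ⟨by simp [hs1pl, hwu], by simp [hs1col, hwu], ?_⟩
    intro x hadj
    have hx := pathGraph_adj.mp hadj
    have hxu : x ≠ u := by
      intro h
      have : (x : ℕ) = (u : ℕ) := by rw [h]
      omega
    simp [hs1col, hxu]
  have hs2 := hall w a hlegw
  set s2 := EGStep s1 w a with hs2def
  obtain ⟨z, hzu, hzw⟩ := exists_third (by omega) u w
  have hs2pl : s2.played = {w, u} := by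
    rw [hs2def, step_played_eq, hs1pl]
    rw [hs1pl]
    apply ne_univ_of_not_mem (u := z)
    simp [hzu, hzw]
  have hs2col : ∀ x : Fin n, s2.col x = if x = u ∨ x = w then some a else none := by
    intro x
    rcases eq_or_ne x w with rfl | hx
    · simp [hs2def, step_col]
    · rw [hs2def, step_col, Function.update_of_ne hx, hs1col]
      rcases eq_or_ne x u with rfl | hx2
      · simp [hx]
      · simp [hx, hx2]
  have hP : Phase1 n p a s2 := by
    refine ⟨hp3, ?_, ?_, ?_, ?_⟩
    · intro v x c hadj hv hx
      have hvuw : v = u ∨ v = w := by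
        by_contra hc
        push_neg at hc
        rw [hs2col] at hv
        simp [hc.1, hc.2] at hv
      have hxuw : x = u ∨ x = w := by
        by_contra hc
        push_neg at hc
        rw [hs2col] at hx
        simp [hc.1, hc.2] at hx
      have hadj' := pathGraph_adj.mp hadj
      have h1 : (v : ℕ) = (u : ℕ) ∨ (v : ℕ) = (w : ℕ) := by
        rcases hvuw with rfl | rfl <;> simp
      have h2 : (x : ℕ) = (u : ℕ) ∨ (x : ℕ) = (w : ℕ) := by
        rcases hxuw with rfl | rfl <;> simp
      omega
    · intro x
      rw [hs2pl, hs2col]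
      rcases eq_or_ne x u with rfl | h1
      · simp
      · rcases eq_or_ne x w with rfl | h2
        · simp [h1]
        · simp [h1, h2]
    · rw [optAt, dif_pos (by omega : p < n), hs2col]
      have : (⟨p, by omega⟩ : Fin n) = u ∨ (⟨p, by omega⟩ : Fin n) = w := by
        rcases hw with ⟨h1, h2⟩ | ⟨h1, h2⟩
        · left; exact Fin.ext (by simp [h1])
        · right; exact Fin.ext (by simp [h2])
      simp [this]
    · rw [optAt, dif_pos hp3, hs2col]
      have : (⟨p + 3, hp3⟩ : Fin n) = u ∨ (⟨p + 3, hp3⟩ : Fin n) = w := by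
        rcases hw with ⟨h1, h2⟩ | ⟨h1, h2⟩
        · right; exact Fin.ext (by simp [h2])
        · left; exact Fin.ext (by simp [h1])
      simp [this]
  have hcard : (Finset.univ.filter (fun x => s2.col x = none)).card = (n - 3) + 1 := by
    have : Finset.univ.filter (fun x => s2.col x = none) = ({u, w} : Finset (Fin n))ᶜ := by
      ext x
      rw [Finset.mem_filter, hs2col]
      rcases eq_or_ne x u with rfl | h1
      · simp
      · rcases eq_or_ne x w with rfl | h2
        · simp [h1]
        · simp [h1, h2]
    rw [this, Finset.card_compl]
    have hcuw : ({u, w} : Finset (Fin n)).card = 2 := by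
      rw [Finset.card_insert_of_notMem (by simp [Ne.symm hwu]), Finset.card_singleton]
    rw [hcuw, Fintype.card_fin]
    omega
  have := phase1_wins (n - 3) s2 hP hcard
  rw [show (n - 3) + 3 = n by omega] at this
  exact this hs2
end Final
set_option maxRecDepth 40000 in
lemma p4_three : ¬ EGSurvives (pathGraph 4) 8 (EGInit (Fin 4) 3) := by decide

set_option maxRecDepth 40000 in
lemma p5_three : ¬ EGSurvives (pathGraph 5) 7 (EGInit (Fin 5) 3) := by decide

/-- For n ≥ 4, χ_g^∞(P_n) = 4; in particular Bob wins on P_4 with only 3 colors. -/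
theorem eternal_game_chromatic_path (n : ℕ) (hn : 4 ≤ n) :
    IsLeast {k | AliceWinsEG (pathGraph n) k} 4 ∧ ¬ AliceWinsEG (pathGraph 4) 3 := by
  have hP4 : ¬ AliceWinsEG (pathGraph 4) 3 := fun h => p4_three (h 8)
  refine ⟨⟨alice_wins_four (by omega), ?_⟩, hP4⟩
  intro k hk
  by_contra hlt
  push_neg at hlt
  have hk' : AliceWinsEG (pathGraph n) k := hk
  interval_cases k
  · exact bob_wins_zero (hk' 1)
  · exact bob_wins_one (by omega) (hk' 2)
  · exact bob_wins_two (by omega) (hk' 4)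
  · rcases (by omega : n = 4 ∨ n = 5 ∨ 6 ≤ n) with rfl | rfl | h6
    · exact hP4 hk'
    · exact p5_three (hk' 7)
    · exact bob_wins_three h6 (hk' (n + 2))
end

section
/- In the Greedy Coloring Game played eternally on the star K_{1,n}: if n is odd then χ_g^{∞2}(K_{1,n}) = 3, and if n ≥ 4 is even then χ_g^{∞2}(K_{1,n}) = 4. -/
open SimpleGraph

variable {V : Type} [Fintype V] [DecidableEq V]

/-- In the Greedy Coloring Game, Bob must use the smallest-indexed legal color on the
vertex he chooses. -/
def EGLegalBobGreedy (G : SimpleGraph V) {k : ℕ} (s : EGState V k) (v : V) (c : Fin k) : Prop :=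
  EGLegal G s v c ∧ ∀ c', c' < c → ¬ EGLegal G s v c'

/-- Survival in the eternal Greedy Coloring Game. -/
def EGSurvivesGreedy (G : SimpleGraph V) {k : ℕ} : ℕ → EGState V k → Prop
  | 0, _ => True
  | n + 1, s =>
      if s.aliceTurn then
        ∃ v c, EGLegal G s v c ∧ EGSurvivesGreedy G n (EGStep s v c)
      else
        (∀ v, v ∉ s.played → ∃ c, EGLegal G s v c) ∧
          ∀ v c, EGLegalBobGreedy G s v c → EGSurvivesGreedy G n (EGStep s v c)

/-- Alice wins the eternal Greedy Coloring Game on `G` with `k` colors. -/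
def AliceWinsEGGreedy (G : SimpleGraph V) (k : ℕ) : Prop :=
  ∀ n, EGSurvivesGreedy G n (EGInit V k)

-- ===== auxiliary infrastructure =====
namespace StarProof

abbrev SV (n : ℕ) := Fin 1 ⊕ Fin n
abbrev SG (n : ℕ) : SimpleGraph (SV n) := completeBipartiteGraph (Fin 1) (Fin n)

variable {n k : ℕ}

lemma fin1_eq (x : Fin 1) : x = 0 := Subsingleton.elim x 0

lemma adj_inl_inr (x : Fin 1) (i : Fin n) : (SG n).Adj (Sum.inl x) (Sum.inr i) := by
  simp [completeBipartiteGraph]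

lemma adj_inl {x : Fin 1} {u : SV n} (h : (SG n).Adj (Sum.inl x) u) : ∃ i, u = Sum.inr i := by
  cases u with
  | inl y => simp [completeBipartiteGraph] at h
  | inr i => exact ⟨i, rfl⟩

lemma adj_inr {i : Fin n} {u : SV n} (h : (SG n).Adj (Sum.inr i) u) : u = Sum.inl 0 := by
  cases u with
  | inl y => rw [fin1_eq y]
  | inr j => simp [completeBipartiteGraph] at h

lemma bnot_decide_mod (m : ℕ) :
    (!decide (m % 2 = 1)) = decide ((m + 1) % 2 = 1) := by
  rcases Nat.mod_two_eq_zero_or_one m with h | h <;>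
    simp [h, Nat.add_mod]

lemma bnot_decide_mod' (m : ℕ) :
    (!decide (m % 2 = 0)) = decide ((m + 1) % 2 = 0) := by
  rcases Nat.mod_two_eq_zero_or_one m with h | h <;>
    simp [h, Nat.add_mod]

lemma exists_not_mem {S : Finset (Fin n)} (h : S ≠ Finset.univ) : ∃ i, i ∉ S := by
  by_contra hc
  push_neg at hc
  exact h (Finset.eq_univ_iff_forall.mpr hc)

lemma empty_ne_univ (hn : 0 < n) : (∅ : Finset (Fin n)) ≠ Finset.univ := by
  intro h
  have := Finset.mem_univ (⟨0, hn⟩ : Fin n)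
  rw [← h] at this
  exact absurd this (Finset.notMem_empty _)

lemma card_SV : Fintype.card (SV n) = n + 1 := by
  simp [Fintype.card_sum, Nat.add_comm]

lemma insert_inr_played_univ_iff {S : Finset (Fin n)} {i : Fin n} :
    insert (Sum.inr i) (insert (Sum.inl 0) (S.image Sum.inr)) = (Finset.univ : Finset (SV n))
      ↔ insert i S = Finset.univ := by
  constructor
  · intro h
    apply Finset.eq_univ_iff_forall.mpr
    intro j
    have := Finset.eq_univ_iff_forall.mp h (Sum.inr j)
    simp only [Finset.mem_insert, Finset.mem_image] at this
    rcases this with h1 | h1 | ⟨a, ha, he⟩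
    · rw [Sum.inr.injEq] at h1; simp [h1]
    · exact absurd h1 (by simp)
    · rw [Sum.inr.injEq] at he; subst he; simp [ha]
  · intro h
    apply Finset.eq_univ_iff_forall.mpr
    intro v
    cases v with
    | inl x => rw [fin1_eq x]; simp
    | inr j =>
      have := Finset.eq_univ_iff_forall.mp h j
      simp only [Finset.mem_insert] at this
      rcases this with h1 | h1
      · simp [h1]
      · simp only [Finset.mem_insert, Finset.mem_image]
        exact Or.inr (Or.inr ⟨j, h1, rfl⟩)


def IsStart (s : EGState (SV n) k) (bo ao : Option (Fin k)) : Prop :=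
  (∀ x, s.col (Sum.inl x) = bo) ∧ (∀ i, s.col (Sum.inr i) = ao) ∧ s.played = ∅

def IsMid (s : EGState (SV n) k) (cc d : Fin k) (ao : Option (Fin k)) (S : Finset (Fin n)) :
    Prop :=
  (∀ x, s.col (Sum.inl x) = some cc) ∧
    (∀ i, s.col (Sum.inr i) = if i ∈ S then some d else ao) ∧
    s.played = insert (Sum.inl 0) (S.image Sum.inr)

lemma legal_center_start {s : EGState (SV n) k} {bo ao : Option (Fin k)} {c : Fin k}
    (h : IsStart s bo ao) (h1 : bo ≠ some c) (h2 : ao ≠ some c) :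
    EGLegal (SG n) s (Sum.inl 0) c := by
  refine ⟨by simp [h.2.2], by rw [h.1]; exact h1, ?_⟩
  intro u hu
  obtain ⟨i, rfl⟩ := adj_inl hu
  rw [h.2.1]; exact h2

lemma step_center_start {s : EGState (SV n) k} {bo ao : Option (Fin k)} (c d : Fin k)
    (h : IsStart s bo ao) (hn : 0 < n) :
    IsMid (EGStep s (Sum.inl 0) c) c d ao ∅ := by
  have hplayed : (EGStep s (Sum.inl 0) c).played = insert (Sum.inl 0) ((∅ : Finset (Fin n)).image Sum.inr) := by
    show (if _ = _ then _ else _) = _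
    rw [if_neg, h.2.2, Finset.image_empty]
    rw [h.2.2]
    intro hc
    have := Finset.eq_univ_iff_forall.mp hc (Sum.inr ⟨0, hn⟩)
    simp at this
  refine ⟨?_, ?_, hplayed⟩
  · intro x
    rw [fin1_eq x]
    show Function.update s.col (Sum.inl 0) (some c) (Sum.inl 0) = some c
    simp
  · intro i
    show Function.update s.col (Sum.inl 0) (some c) (Sum.inr i) = _
    rw [Function.update_of_ne (by simp), h.2.1]
    simp

lemma legal_leaf_mid {s : EGState (SV n) k} {cc d : Fin k} {ao : Option (Fin k)}
    {S : Finset (Fin n)} {i : Fin n} {c : Fin k}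
    (h : IsMid s cc d ao S) (hi : i ∉ S) (hc1 : ao ≠ some c) (hc2 : c ≠ cc) :
    EGLegal (SG n) s (Sum.inr i) c := by
  refine ⟨?_, ?_, ?_⟩
  · rw [h.2.2]
    simp only [Finset.mem_insert, Finset.mem_image]
    rintro (h1 | ⟨a, ha, he⟩)
    · exact absurd h1 (by simp)
    · rw [Sum.inr.injEq] at he; subst he; exact hi ha
  · rw [h.2.1 i, if_neg hi]; exact hc1
  · intro u hu
    rw [adj_inr hu, h.1]
    intro he
    exact hc2 (Option.some_injective _ he).symm

lemma legal_mid_char {s : EGState (SV n) k} {cc d : Fin k} {ao : Option (Fin k)}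
    {S : Finset (Fin n)} {v : SV n} {c : Fin k}
    (h : IsMid s cc d ao S) (hl : EGLegal (SG n) s v c) :
    ∃ i, v = Sum.inr i ∧ i ∉ S ∧ ao ≠ some c ∧ c ≠ cc := by
  obtain ⟨hp, hown, hadj⟩ := hl
  cases v with
  | inl x =>
    exfalso
    rw [fin1_eq x] at hp
    rw [h.2.2] at hp
    exact hp (Finset.mem_insert_self _ _)
  | inr i =>
    have hi : i ∉ S := by
      intro hiS
      apply hp
      rw [h.2.2]
      simp only [Finset.mem_insert, Finset.mem_image]
      exact Or.inr ⟨i, hiS, rfl⟩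
    refine ⟨i, rfl, hi, ?_, ?_⟩
    · rw [h.2.1 i, if_neg hi] at hown; exact hown
    · intro he
      exact hadj (Sum.inl 0) ((adj_inl_inr 0 i).symm) (by rw [h.1, he])

lemma greedy_mid_char {s : EGState (SV n) k} {cc d : Fin k} {ao : Option (Fin k)}
    {S : Finset (Fin n)} {v : SV n} {c : Fin k}
    (h : IsMid s cc d ao S)
    (hd1 : d ≠ cc) (hd2 : ao ≠ some d)
    (hmin : ∀ c' : Fin k, c' ≠ cc → ao ≠ some c' → d ≤ c')
    (hg : EGLegalBobGreedy (SG n) s v c) :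
    ∃ i, v = Sum.inr i ∧ i ∉ S ∧ c = d := by
  obtain ⟨i, rfl, hi, hc1, hc2⟩ := legal_mid_char h hg.1
  refine ⟨i, rfl, hi, ?_⟩
  have hdc : d ≤ c := hmin c hc2 hc1
  rcases eq_or_lt_of_le hdc with he | hlt
  · exact he.symm
  · exact absurd (legal_leaf_mid h hi hd2 hd1) (hg.2 d hlt)

lemma step_leaf_mid_univ {s : EGState (SV n) k} {cc d : Fin k} {ao : Option (Fin k)}
    {S : Finset (Fin n)} {i : Fin n}
    (h : IsMid s cc d ao S) (hu : insert i S = Finset.univ) :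
    IsStart (EGStep s (Sum.inr i) d) (some cc) (some d) := by
  refine ⟨?_, ?_, ?_⟩
  · intro x
    show Function.update s.col (Sum.inr i) (some d) (Sum.inl x) = _
    rw [Function.update_of_ne (by simp), h.1]
  · intro j
    by_cases hj : j = i
    · subst hj
      show Function.update s.col (Sum.inr j) (some d) (Sum.inr j) = _
      simp
    · show Function.update s.col (Sum.inr i) (some d) (Sum.inr j) = _
      rw [Function.update_of_ne (by simp [hj]), h.2.1 j,
        if_pos (by have := Finset.eq_univ_iff_forall.mp hu j; simpa [hj] using this)]
  · show (if _ = _ then _ else _) = _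
    rw [h.2.2, if_pos (insert_inr_played_univ_iff.mpr hu)]

lemma step_leaf_mid_not_univ {s : EGState (SV n) k} {cc d : Fin k} {ao : Option (Fin k)}
    {S : Finset (Fin n)} {i : Fin n}
    (h : IsMid s cc d ao S) (hu : insert i S ≠ Finset.univ) :
    IsMid (EGStep s (Sum.inr i) d) cc d ao (insert i S) := by
  refine ⟨?_, ?_, ?_⟩
  · intro x
    show Function.update s.col (Sum.inr i) (some d) (Sum.inl x) = _
    rw [Function.update_of_ne (by simp), h.1]
  · intro j
    by_cases hj : j = i
    · subst hj
      show Function.update s.col (Sum.inr j) (some d) (Sum.inr j) = _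
      simp
    · show Function.update s.col (Sum.inr i) (some d) (Sum.inr j) = _
      rw [Function.update_of_ne (by simp [hj]), h.2.1 j]
      by_cases hjS : j ∈ S
      · rw [if_pos hjS, if_pos (Finset.mem_insert_of_mem hjS)]
      · rw [if_neg hjS, if_neg (by simp [hj, hjS])]
  · show (if _ = _ then _ else _) = _
    rw [h.2.2, if_neg (fun hc => hu (insert_inr_played_univ_iff.mp hc)),
      Finset.image_insert, Finset.insert_comm]


lemma turn_step {s : EGState (SV n) k} (v : SV n) (c : Fin k) :
    (EGStep s v c).aliceTurn = !s.aliceTurn := rfl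

def PairO (bo ao : Option (Fin 3)) : Prop :=
  (bo = none ∧ ao = none) ∨ (bo = some 2 ∧ ao = some 0) ∨
    (bo = some 1 ∧ ao = some 2) ∨ (bo = some 0 ∧ ao = some 1)

def TripO (cc : Fin 3) (ao : Option (Fin 3)) (d : Fin 3) : Prop :=
  (cc = 2 ∧ ao = none ∧ d = 0) ∨ (cc = 1 ∧ ao = some 0 ∧ d = 2) ∨
    (cc = 0 ∧ ao = some 2 ∧ d = 1) ∨ (cc = 2 ∧ ao = some 1 ∧ d = 0)

def GoodO (s : EGState (SV n) 3) : Prop :=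
  (s.aliceTurn = true ∧ ∃ bo ao, PairO bo ao ∧ IsStart s bo ao) ∨
    (∃ cc ao d S, TripO cc ao d ∧ IsMid s cc d ao S ∧
      s.aliceTurn = decide (S.card % 2 = 1) ∧ S ≠ Finset.univ)

lemma pairO_next {bo ao : Option (Fin 3)} (hp : PairO bo ao) :
    ∃ cc : Fin 3, ∃ d : Fin 3, bo ≠ some cc ∧ ao ≠ some cc ∧ TripO cc ao d := by
  rcases hp with ⟨rfl, rfl⟩ | ⟨rfl, rfl⟩ | ⟨rfl, rfl⟩ | ⟨rfl, rfl⟩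
  · exact ⟨2, 0, by decide, by decide, Or.inl ⟨rfl, rfl, rfl⟩⟩
  · exact ⟨1, 2, by decide, by decide, Or.inr (Or.inl ⟨rfl, rfl, rfl⟩)⟩
  · exact ⟨0, 1, by decide, by decide, Or.inr (Or.inr (Or.inl ⟨rfl, rfl, rfl⟩))⟩
  · exact ⟨2, 0, by decide, by decide, Or.inr (Or.inr (Or.inr ⟨rfl, rfl, rfl⟩))⟩

lemma tripO_facts {cc : Fin 3} {ao : Option (Fin 3)} {d : Fin 3} (h : TripO cc ao d) :
    d ≠ cc ∧ ao ≠ some d ∧ (∀ c' : Fin 3, c' ≠ cc → ao ≠ some c' → d ≤ c') ∧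
      PairO (some cc) (some d) := by
  rcases h with ⟨rfl, rfl, rfl⟩ | ⟨rfl, rfl, rfl⟩ | ⟨rfl, rfl, rfl⟩ | ⟨rfl, rfl, rfl⟩
  · exact ⟨by decide, by decide, by decide, Or.inr (Or.inl ⟨rfl, rfl⟩)⟩
  · exact ⟨by decide, by decide, by decide, Or.inr (Or.inr (Or.inl ⟨rfl, rfl⟩))⟩
  · exact ⟨by decide, by decide, by decide, Or.inr (Or.inr (Or.inr ⟨rfl, rfl⟩))⟩
  · exact ⟨by decide, by decide, by decide, Or.inr (Or.inl ⟨rfl, rfl⟩)⟩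

lemma goodO_surv (hn : Odd n) :
    ∀ m (s : EGState (SV n) 3), GoodO s → EGSurvivesGreedy (SG n) m s := by
  have hn1 : 0 < n := hn.pos
  intro m
  induction m with
  | zero => intro s _; trivial
  | succ m ih =>
    intro s hg
    show (if s.aliceTurn then
        ∃ v c, EGLegal (SG n) s v c ∧ EGSurvivesGreedy (SG n) m (EGStep s v c)
      else
        (∀ v, v ∉ s.played → ∃ c, EGLegal (SG n) s v c) ∧
          ∀ v c, EGLegalBobGreedy (SG n) s v c → EGSurvivesGreedy (SG n) m (EGStep s v c))
    rcases hg with ⟨hturn, bo, ao, hp, hst⟩ | ⟨cc, ao, d, S, htr, hmid, hturn, hSne⟩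
    · rw [if_pos hturn]
      obtain ⟨cc, d, h1, h2, htr⟩ := pairO_next hp
      refine ⟨Sum.inl 0, cc, legal_center_start hst h1 h2, ih _ ?_⟩
      refine Or.inr ⟨cc, ao, d, ∅, htr, step_center_start cc d hst hn1, ?_, ?_⟩
      · rw [turn_step, hturn]
        simp
      · exact fun hc => empty_ne_univ hn1 hc
    · obtain ⟨hd1, hd2, hmin, hpnext⟩ := tripO_facts htr
      have hstepgood : ∀ i : Fin n, i ∉ S → GoodO (EGStep s (Sum.inr i) d) := by
        intro i hi
        by_cases hu : insert i S = Finset.univ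
        · refine Or.inl ⟨?_, some cc, some d, hpnext, step_leaf_mid_univ hmid hu⟩
          rw [turn_step, hturn]
          have hcard : S.card + 1 = n := by
            have := Finset.card_insert_of_notMem hi
            rw [hu, Finset.card_univ, Fintype.card_fin] at this
            omega
          have : S.card % 2 = 0 := by
            have hodd := Nat.odd_iff.mp hn
            omega
          simp [this]
        · refine Or.inr ⟨cc, ao, d, insert i S, htr, step_leaf_mid_not_univ hmid hu, ?_, hu⟩
          rw [turn_step, hturn, Finset.card_insert_of_notMem hi, bnot_decide_mod]
      rcases Nat.mod_two_eq_zero_or_one S.card with hpar | hpar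
    
      · -- Bob's turn
        rw [if_neg (by rw [hturn]; simp [hpar])]
        constructor
        · intro v hv
          cases v with
          | inl x =>
            exfalso
            rw [fin1_eq x, hmid.2.2] at hv
            exact hv (Finset.mem_insert_self _ _)
          | inr i =>
            have hi : i ∉ S := by
              intro hiS
              apply hv
              rw [hmid.2.2]
              simp only [Finset.mem_insert, Finset.mem_image]
              exact Or.inr ⟨i, hiS, rfl⟩
            exact ⟨d, legal_leaf_mid hmid hi hd2 hd1⟩
        · intro v c hg
          obtain ⟨i, rfl, hi, rfl⟩ := greedy_mid_char hmid hd1 hd2 hmin hg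
          exact ih _ (hstepgood i hi)
      · -- Alice's turn
        rw [if_pos (by rw [hturn]; simp [hpar])]
        obtain ⟨i, hi⟩ := exists_not_mem hSne
        exact ⟨Sum.inr i, d, legal_leaf_mid hmid hi hd2 hd1, ih _ (hstepgood i hi)⟩

lemma aliceWins_odd3 (hn : Odd n) : AliceWinsEGGreedy (SG n) 3 := by
  intro m
  apply goodO_surv hn
  exact Or.inl ⟨rfl, none, none, Or.inl ⟨rfl, rfl⟩, fun _ => rfl, fun _ => rfl, rfl⟩


lemma legal_leaf_start {s : EGState (SV n) k} {bo ao : Option (Fin k)} {c : Fin k} {i : Fin n}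
    (h : IsStart s bo ao) (hc1 : ao ≠ some c) (hc2 : bo ≠ some c) :
    EGLegal (SG n) s (Sum.inr i) c := by
  refine ⟨by simp [h.2.2], by rw [h.2.1]; exact hc1, ?_⟩
  intro u hu
  rw [adj_inr hu, h.1]
  exact hc2

lemma greedy_start_char {s : EGState (SV n) k} {b a : Fin k} {v : SV n} {c : Fin k}
    (h : IsStart s (some b) (some a)) (hn : 0 < n)
    (hg : EGLegalBobGreedy (SG n) s v c) :
    c ≠ b ∧ c ≠ a ∧ ∀ c', c' ≠ b → c' ≠ a → c ≤ c' := by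
  obtain ⟨⟨hp, hown, hadj⟩, hmin⟩ := hg
  have hkey : c ≠ b ∧ c ≠ a := by
    cases v with
    | inl x =>
      refine ⟨fun he => hown (by rw [h.1, he]), fun he => ?_⟩
      exact hadj (Sum.inr ⟨0, hn⟩) (adj_inl_inr x ⟨0, hn⟩) (by rw [h.2.1, he])
    | inr i =>
      refine ⟨fun he => ?_, fun he => hown (by rw [h.2.1, he])⟩
      exact hadj (Sum.inl 0) ((adj_inl_inr 0 i).symm) (by rw [h.1, he])
  refine ⟨hkey.1, hkey.2, fun c' hc1 hc2 => ?_⟩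
  by_contra hlt
  push_neg at hlt
  apply hmin c' hlt
  cases v with
  | inl x =>
    rw [fin1_eq x]
    exact legal_center_start h (by simpa [eq_comm] using hc1) (by simpa [eq_comm] using hc2)
  | inr i => exact legal_leaf_start h (by simpa [eq_comm] using hc2) (by simpa [eq_comm] using hc1)

lemma step_leaf_start {s : EGState (SV n) k} {bo ao : Option (Fin k)} (ℓ : Fin n) (c : Fin k)
    (h : IsStart s bo ao) :
    (∀ x, (EGStep s (Sum.inr ℓ) c).col (Sum.inl x) = bo) ∧
      (∀ i, (EGStep s (Sum.inr ℓ) c).col (Sum.inr i) = if i = ℓ then some c else ao) ∧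
      (EGStep s (Sum.inr ℓ) c).played = {Sum.inr ℓ} := by
  refine ⟨?_, ?_, ?_⟩
  · intro x
    show Function.update s.col (Sum.inr ℓ) (some c) (Sum.inl x) = _
    rw [Function.update_of_ne (by simp), h.1]
  · intro i
    by_cases hi : i = ℓ
    · subst hi
      show Function.update s.col (Sum.inr i) (some c) (Sum.inr i) = _
      simp
    · show Function.update s.col (Sum.inr ℓ) (some c) (Sum.inr i) = _
      rw [Function.update_of_ne (by simp [hi]), h.2.1, if_neg hi]
  · show (if _ = _ then _ else _) = _
    rw [h.2.2]
    refine if_neg ?_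
    intro hc
    have := Finset.eq_univ_iff_forall.mp hc (Sum.inl 0)
    simp at this

def PairE (bo ao : Option (Fin 4)) : Prop :=
  (bo = none ∧ ao = none) ∨ (bo = some 1 ∧ ao = some 2) ∨ (bo = some 2 ∧ ao = some 1)

def GoodE (s : EGState (SV n) 4) : Prop :=
  (s.aliceTurn = true ∧ ∃ bo ao, PairE bo ao ∧ IsStart s bo ao) ∨
    (∃ ao S, (ao = none ∨ ao = some 1 ∨ ao = some 2) ∧ IsMid s 3 0 ao S ∧
      s.aliceTurn = decide (S.card % 2 = 1) ∧ S ≠ Finset.univ) ∨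
    (s.aliceTurn = false ∧ IsStart s (some 3) (some 0)) ∨
    (∃ S, IsMid s 1 2 (some 0) S ∧ s.aliceTurn = decide (S.card % 2 = 0) ∧ S ≠ Finset.univ) ∨
    (∃ ℓ : Fin n, s.aliceTurn = true ∧ (∀ x, s.col (Sum.inl x) = some 3) ∧
      (∀ i, s.col (Sum.inr i) = if i = ℓ then some 1 else some 0) ∧
      s.played = {Sum.inr ℓ}) ∨
    (∃ T, IsMid s 2 1 (some 0) T ∧ s.aliceTurn = decide (T.card % 2 = 0) ∧ T ≠ Finset.univ)

lemma goodE_surv (hn2 : 2 ≤ n) (heven : n % 2 = 0) :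
    ∀ m (s : EGState (SV n) 4), GoodE s → EGSurvivesGreedy (SG n) m s := by
  have hn1 : 0 < n := by omega
  intro m
  induction m with
  | zero => intro s _; trivial
  | succ m ih =>
    intro s hg
    show (if s.aliceTurn then
        ∃ v c, EGLegal (SG n) s v c ∧ EGSurvivesGreedy (SG n) m (EGStep s v c)
      else
        (∀ v, v ∉ s.played → ∃ c, EGLegal (SG n) s v c) ∧
          ∀ v c, EGLegalBobGreedy (SG n) s v c → EGSurvivesGreedy (SG n) m (EGStep s v c))
    rcases hg with ⟨hturn, bo, ao, hp, hst⟩ | ⟨ao, S, hao, hmid, hturn, hSne⟩ |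
      ⟨hturn, hst⟩ | ⟨S, hmid, hturn, hSne⟩ | ⟨ℓ, hturn, hcl, hcr, hpl⟩ |
      ⟨T, hmid, hturn, hSne⟩
    · -- A-start: Alice recolors the center with 3
      rw [if_pos hturn]
      have hb : bo ≠ some 3 ∧ ao ≠ some 3 ∧ (ao = none ∨ ao = some 1 ∨ ao = some 2) := by
        rcases hp with ⟨rfl, rfl⟩ | ⟨rfl, rfl⟩ | ⟨rfl, rfl⟩
        · exact ⟨by decide, by decide, Or.inl rfl⟩
        · exact ⟨by decide, by decide, Or.inr (Or.inr rfl)⟩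
        · exact ⟨by decide, by decide, Or.inr (Or.inl rfl)⟩
      refine ⟨Sum.inl 0, 3, legal_center_start hst hb.1 hb.2.1, ih _ ?_⟩
      refine Or.inr (Or.inl ⟨ao, ∅, hb.2.2, step_center_start 3 0 hst hn1, ?_, ?_⟩)
      · rw [turn_step, hturn]; simp
      · exact fun hc => empty_ne_univ hn1 hc
    · -- M1 : center 3 played, leaves going to 0
      have hd1 : (0 : Fin 4) ≠ 3 := by decide
      have hd2 : ao ≠ some 0 := by
        rcases hao with rfl | rfl | rfl <;> decide
      have hmin : ∀ c' : Fin 4, c' ≠ 3 → ao ≠ some c' → (0 : Fin 4) ≤ c' := by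
        intro c' _ _
        exact Fin.zero_le c'
      have hstepgood : ∀ i : Fin n, i ∉ S → GoodE (EGStep s (Sum.inr i) 0) := by
        intro i hi
        by_cases hu : insert i S = Finset.univ
        · refine Or.inr (Or.inr (Or.inl ⟨?_, step_leaf_mid_univ hmid hu⟩))
          rw [turn_step, hturn]
          have hcard : S.card + 1 = n := by
            have := Finset.card_insert_of_notMem hi
            rw [hu, Finset.card_univ, Fintype.card_fin] at this
            omega
          have : S.card % 2 = 1 := by omega
          simp [this]
        · refine Or.inr (Or.inl ⟨ao, insert i S, hao, step_leaf_mid_not_univ hmid hu, ?_, hu⟩)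
          rw [turn_step, hturn, Finset.card_insert_of_notMem hi, bnot_decide_mod]
      rcases Nat.mod_two_eq_zero_or_one S.card with hpar | hpar
      · rw [if_neg (by rw [hturn]; simp [hpar])]
        constructor
        · intro v hv
          cases v with
          | inl x =>
            exfalso
            rw [fin1_eq x, hmid.2.2] at hv
            exact hv (Finset.mem_insert_self _ _)
          | inr i =>
            have hi : i ∉ S := by
              intro hiS
              apply hv
              rw [hmid.2.2]
              simp only [Finset.mem_insert, Finset.mem_image]
              exact Or.inr ⟨i, hiS, rfl⟩
            exact ⟨0, legal_leaf_mid hmid hi hd2 hd1⟩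
        · intro v c hg
          obtain ⟨i, rfl, hi, rfl⟩ := greedy_mid_char hmid hd1 hd2 hmin hg
          exact ih _ (hstepgood i hi)
      · rw [if_pos (by rw [hturn]; simp [hpar])]
        obtain ⟨i, hi⟩ := exists_not_mem hSne
        exact ⟨Sum.inr i, 0, legal_leaf_mid hmid hi hd2 hd1, ih _ (hstepgood i hi)⟩
    · -- R3 : Bob starts a round, center 3, leaves 0
      rw [if_neg (by rw [hturn]; simp)]
      constructor
      · intro v _
        cases v with
        | inl x =>
          rw [fin1_eq x]
          exact ⟨1, legal_center_start hst (by decide) (by decide)⟩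
        | inr i => exact ⟨1, legal_leaf_start hst (by decide) (by decide)⟩
      · intro v c hg
        obtain ⟨hc3, hc0, hmin⟩ := greedy_start_char hst hn1 hg
        have hc : c = 1 := by
          have h1 := hmin 1 (by decide) (by decide)
          rw [Fin.le_def] at h1
          have hv0 : c.val ≠ 0 := fun h => hc0 (Fin.ext (by simpa using h))
          apply Fin.ext
          have hval : (1 : Fin 4).val = 1 := rfl
          omega
        subst hc
        cases v with
        | inl x =>
          rw [fin1_eq x]
          apply ih
          refine Or.inr (Or.inr (Or.inr (Or.inl ⟨∅, step_center_start 1 2 hst hn1, ?_, ?_⟩)))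
          · rw [turn_step, hturn]; simp
          · exact fun hc => empty_ne_univ hn1 hc
        | inr ℓ =>
          apply ih
          obtain ⟨h1, h2, h3⟩ := step_leaf_start ℓ 1 hst
          refine Or.inr (Or.inr (Or.inr (Or.inr (Or.inl ⟨ℓ, ?_, h1, h2, h3⟩))))
          rw [turn_step, hturn]
          simp
    · -- M2 : center 1 played, leaves going from 0 to 2
      have hd1 : (2 : Fin 4) ≠ 1 := by decide
      have hd2 : (some 0 : Option (Fin 4)) ≠ some 2 := by decide
      have hmin : ∀ c' : Fin 4, c' ≠ 1 → (some 0 : Option (Fin 4)) ≠ some c' →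
          (2 : Fin 4) ≤ c' := by decide
      have hstepgood : ∀ i : Fin n, i ∉ S → GoodE (EGStep s (Sum.inr i) 2) := by
        intro i hi
        by_cases hu : insert i S = Finset.univ
        · refine Or.inl ⟨?_, some 1, some 2, Or.inr (Or.inl ⟨rfl, rfl⟩),
            step_leaf_mid_univ hmid hu⟩
          rw [turn_step, hturn]
          have hcard : S.card + 1 = n := by
            have := Finset.card_insert_of_notMem hi
            rw [hu, Finset.card_univ, Fintype.card_fin] at this
            omega
          have : S.card % 2 = 1 := by omega
          simp [this]
        · refine Or.inr (Or.inr (Or.inr (Or.inl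
            ⟨insert i S, step_leaf_mid_not_univ hmid hu, ?_, hu⟩)))
          rw [turn_step, hturn, Finset.card_insert_of_notMem hi, bnot_decide_mod']
      rcases Nat.mod_two_eq_zero_or_one S.card with hpar | hpar
      · rw [if_pos (by rw [hturn]; simp [hpar])]
        obtain ⟨i, hi⟩ := exists_not_mem hSne
        exact ⟨Sum.inr i, 2, legal_leaf_mid hmid hi hd2 hd1, ih _ (hstepgood i hi)⟩
      · rw [if_neg (by rw [hturn]; simp [hpar])]
        constructor
        · intro v hv
          cases v with
          | inl x =>
            exfalso
            rw [fin1_eq x, hmid.2.2] at hv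
            exact hv (Finset.mem_insert_self _ _)
          | inr i =>
            have hi : i ∉ S := by
              intro hiS
              apply hv
              rw [hmid.2.2]
              simp only [Finset.mem_insert, Finset.mem_image]
              exact Or.inr ⟨i, hiS, rfl⟩
            exact ⟨2, legal_leaf_mid hmid hi hd2 hd1⟩
        · intro v c hg
          obtain ⟨i, rfl, hi, rfl⟩ := greedy_mid_char hmid hd1 hd2 hmin hg
          exact ih _ (hstepgood i hi)
    · -- M3 : Bob recolored a leaf to 1, center 3 unplayed; Alice recolors center to 2
      rw [if_pos hturn]
      have hleg : EGLegal (SG n) s (Sum.inl 0) 2 := by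
        refine ⟨by rw [hpl]; simp, by rw [hcl]; decide, ?_⟩
        intro u hu
        obtain ⟨i, rfl⟩ := adj_inl hu
        rw [hcr i]
        by_cases hi : i = ℓ <;> simp [hi]
      refine ⟨Sum.inl 0, 2, hleg, ih _ ?_⟩
      have hplayed : (EGStep s (Sum.inl 0) 2).played =
          insert (Sum.inl 0) (({ℓ} : Finset (Fin n)).image Sum.inr) := by
        show (if _ = _ then _ else _) = _
        rw [hpl, Finset.image_singleton]
        rw [if_neg]
        intro hc
        obtain ⟨j, hj⟩ : ∃ j : Fin n, j ≠ ℓ := by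
          rcases Finset.exists_mem_ne (by rw [Finset.card_univ, Fintype.card_fin]; omega) ℓ
            with ⟨j, _, hj⟩
          exact ⟨j, hj⟩
        have := Finset.eq_univ_iff_forall.mp hc (Sum.inr j)
        simp [hj] at this
      refine Or.inr (Or.inr (Or.inr (Or.inr (Or.inr ⟨{ℓ}, ⟨?_, ?_, hplayed⟩, ?_, ?_⟩))))
      · intro x
        rw [fin1_eq x]
        show Function.update s.col (Sum.inl 0) (some 2) (Sum.inl 0) = _
        simp
      · intro i
        show Function.update s.col (Sum.inl 0) (some 2) (Sum.inr i) = _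
        rw [Function.update_of_ne (by simp), hcr i]
        by_cases hi : i = ℓ <;> simp [hi]
      · rw [turn_step, hturn]
        simp
      · intro hc
        have := congrArg Finset.card hc
        rw [Finset.card_singleton, Finset.card_univ, Fintype.card_fin] at this
        omega
    · -- M4 : center 2 played, leaves going from 0 to 1
      have hd1 : (1 : Fin 4) ≠ 2 := by decide
      have hd2 : (some 0 : Option (Fin 4)) ≠ some 1 := by decide
      have hmin : ∀ c' : Fin 4, c' ≠ 2 → (some 0 : Option (Fin 4)) ≠ some c' →
          (1 : Fin 4) ≤ c' := by decide
      have hstepgood : ∀ i : Fin n, i ∉ T → GoodE (EGStep s (Sum.inr i) 1) := by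
        intro i hi
        by_cases hu : insert i T = Finset.univ
        · refine Or.inl ⟨?_, some 2, some 1, Or.inr (Or.inr ⟨rfl, rfl⟩),
            step_leaf_mid_univ hmid hu⟩
          rw [turn_step, hturn]
          have hcard : T.card + 1 = n := by
            have := Finset.card_insert_of_notMem hi
            rw [hu, Finset.card_univ, Fintype.card_fin] at this
            omega
          have : T.card % 2 = 1 := by omega
          simp [this]
        · refine Or.inr (Or.inr (Or.inr (Or.inr (Or.inr
            ⟨insert i T, step_leaf_mid_not_univ hmid hu, ?_, hu⟩))))
          rw [turn_step, hturn, Finset.card_insert_of_notMem hi, bnot_decide_mod']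
      rcases Nat.mod_two_eq_zero_or_one T.card with hpar | hpar
      · rw [if_pos (by rw [hturn]; simp [hpar])]
        obtain ⟨i, hi⟩ := exists_not_mem hSne
        exact ⟨Sum.inr i, 1, legal_leaf_mid hmid hi hd2 hd1, ih _ (hstepgood i hi)⟩
      · rw [if_neg (by rw [hturn]; simp [hpar])]
        constructor
        · intro v hv
          cases v with
          | inl x =>
            exfalso
            rw [fin1_eq x, hmid.2.2] at hv
            exact hv (Finset.mem_insert_self _ _)
          | inr i =>
            have hi : i ∉ T := by
              intro hiT
              apply hv
              rw [hmid.2.2]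
              simp only [Finset.mem_insert, Finset.mem_image]
              exact Or.inr ⟨i, hiT, rfl⟩
            exact ⟨1, legal_leaf_mid hmid hi hd2 hd1⟩
        · intro v c hg
          obtain ⟨i, rfl, hi, rfl⟩ := greedy_mid_char hmid hd1 hd2 hmin hg
          exact ih _ (hstepgood i hi)

lemma aliceWins_even4 (hn2 : 2 ≤ n) (heven : n % 2 = 0) : AliceWinsEGGreedy (SG n) 4 := by
  intro m
  apply goodE_surv hn2 heven
  exact Or.inl ⟨rfl, none, none, Or.inl ⟨rfl, rfl⟩, fun _ => rfl, fun _ => rfl, rfl⟩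


lemma surv_succ (G : SimpleGraph (SV n)) (m : ℕ) (s : EGState (SV n) k) :
    EGSurvivesGreedy G (m + 1) s ↔
      (if s.aliceTurn then
        ∃ v c, EGLegal G s v c ∧ EGSurvivesGreedy G m (EGStep s v c)
      else
        (∀ v, v ∉ s.played → ∃ c, EGLegal G s v c) ∧
          ∀ v c, EGLegalBobGreedy G s v c → EGSurvivesGreedy G m (EGStep s v c)) := Iff.rfl

def Proper (s : EGState (SV n) k) : Prop :=
  ∀ (x : Fin 1) (i : Fin n) (b c : Fin k),
    s.col (Sum.inl x) = some b → s.col (Sum.inr i) = some c → b ≠ c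

def Inv1 (s : EGState (SV n) k) : Prop :=
  s.aliceTurn = decide (s.played.card % 2 = 0) ∧
    (∀ v, s.col v = none ↔ v ∉ s.played) ∧ Proper s

def FullInv (s : EGState (SV n) k) : Prop :=
  s.aliceTurn = decide ((n + 1) % 2 = 0) ∧ s.played = ∅ ∧
    (∀ v, s.col v ≠ none) ∧ Proper s

lemma inv1_init : Inv1 (EGInit (SV n) k) := by
  refine ⟨by simp [EGInit], by simp [EGInit], ?_⟩
  intro x i b c hb hc
  exact absurd hb (by simp [EGInit])

lemma proper_step {s : EGState (SV n) k} {v : SV n} {c : Fin k}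
    (h : Proper s) (hl : EGLegal (SG n) s v c) : Proper (EGStep s v c) := by
  intro x i b' c' hb hc
  cases v with
  | inl y
    =>
    have hx : (Sum.inl x : SV n) = Sum.inl y := by rw [fin1_eq x, fin1_eq y]
    have hb' : b' = c := by
      have : (EGStep s (Sum.inl y) c).col (Sum.inl x) = some c := by
        show Function.update s.col (Sum.inl y) (some c) (Sum.inl x) = some c
        rw [hx]; simp
      rw [this] at hb
      exact (Option.some_injective _ hb.symm)
    have hcol : (EGStep s (Sum.inl y) c).col (Sum.inr i) = s.col (Sum.inr i) := by
      show Function.update s.col (Sum.inl y) (some c) (Sum.inr i) = _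
      rw [Function.update_of_ne (by simp)]
    have := hl.2.2 (Sum.inr i) (adj_inl_inr y i)
    rw [← hcol, hc] at this
    intro he
    exact this (by rw [← he, hb'])
  | inr j =>
    have hcolb : (EGStep s (Sum.inr j) c).col (Sum.inl x) = s.col (Sum.inl x) := by
      show Function.update s.col (Sum.inr j) (some c) (Sum.inl x) = _
      rw [Function.update_of_ne (by simp)]
    rw [hcolb] at hb
    by_cases hij : i = j
    · subst hij
      have : (EGStep s (Sum.inr i) c).col (Sum.inr i) = some c := by
        show Function.update s.col (Sum.inr i) (some c) (Sum.inr i) = some c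
        simp
      rw [this] at hc
      have hc' : c' = c := Option.some_injective _ hc.symm
      have := hl.2.2 (Sum.inl 0) ((adj_inl_inr 0 i).symm)
      rw [show (Sum.inl 0 : SV n) = Sum.inl x by rw [fin1_eq x], hb] at this
      intro he
      exact this (by rw [he, hc'])
    · have : (EGStep s (Sum.inr j) c).col (Sum.inr i) = s.col (Sum.inr i) := by
        show Function.update s.col (Sum.inr j) (some c) (Sum.inr i) = _
        rw [Function.update_of_ne (by simp [hij])]
      rw [this] at hc
      exact h x i b' c' hb hc

lemma inv1_step_lt {s : EGState (SV n) k} {v : SV n} {c : Fin k}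
    (h : Inv1 s) (hl : EGLegal (SG n) s v c) (hcard : s.played.card < n) :
    Inv1 (EGStep s v c) ∧ (EGStep s v c).played.card = s.played.card + 1 := by
  have hv : v ∉ s.played := hl.1
  have hne : insert v s.played ≠ Finset.univ := by
    intro hc2
    have := congrArg Finset.card hc2
    rw [Finset.card_insert_of_notMem hv, Finset.card_univ, card_SV] at this
    omega
  have hplayed : (EGStep s v c).played = insert v s.played := by
    show (if _ = _ then _ else _) = _
    rw [if_neg hne]
  constructor
  · refine ⟨?_, ?_, proper_step h.2.2 hl⟩
    · rw [turn_step, h.1, hplayed, Finset.card_insert_of_notMem hv, bnot_decide_mod']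
    · intro u
      rw [hplayed]
      by_cases hu : u = v
      · subst hu
        constructor
        · intro hn2
          exact absurd hn2 (by show Function.update s.col u (some c) u ≠ none; simp)
        · intro hn2
          exact absurd (Finset.mem_insert_self u s.played) hn2
      · have : (EGStep s v c).col u = s.col u := by
          show Function.update s.col v (some c) u = _
          rw [Function.update_of_ne hu]
        rw [this, h.2.1 u]
        simp [Finset.mem_insert, hu]
  · rw [hplayed, Finset.card_insert_of_notMem hv]

lemma inv1_step_full {s : EGState (SV n) k} {v : SV n} {c : Fin k}
    (h : Inv1 s) (hl : EGLegal (SG n) s v c) (hcard : s.played.card = n) :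
    FullInv (EGStep s v c) := by
  have hv : v ∉ s.played := hl.1
  have huniv : insert v s.played = Finset.univ := by
    apply Finset.eq_univ_of_card
    rw [Finset.card_insert_of_notMem hv, card_SV, hcard]
  have hplayed : (EGStep s v c).played = ∅ := by
    show (if _ = _ then _ else _) = _
    rw [if_pos huniv]
  refine ⟨?_, hplayed, ?_, proper_step h.2.2 hl⟩
  · rw [turn_step, h.1, hcard, bnot_decide_mod']
  · intro u
    by_cases hu : u = v
    · subst hu
      show Function.update s.col u (some c) u ≠ none
      simp
    · have hmem : u ∈ s.played := by
        have : u ∈ insert v s.played := by rw [huniv]; exact Finset.mem_univ u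
        rcases Finset.mem_insert.mp this with h1 | h1
        · exact absurd h1 hu
        · exact h1
      have : (EGStep s v c).col u = s.col u := by
        show Function.update s.col v (some c) u = _
        rw [Function.update_of_ne hu]
      rw [this]
      intro hnone
      exact (h.2.1 u).mp hnone hmem

lemma doom_round1 {c0 : ℕ}
    (hbase : ∀ s : EGState (SV n) k, FullInv s → ¬ EGSurvivesGreedy (SG n) c0 s) :
    ∀ d, 1 ≤ d → ∀ s : EGState (SV n) k, Inv1 s → s.played.card + d = n + 1 →
      ¬ EGSurvivesGreedy (SG n) (c0 + d) s := by
  intro d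
  induction d with
  | zero => omega
  | succ d ihd =>
    intro _ s hInv hcard hsurv
    have hsurv' : EGSurvivesGreedy (SG n) ((c0 + d) + 1) s := by
      rw [show (c0 + d) + 1 = c0 + (d + 1) by omega]
      exact hsurv
    rw [surv_succ] at hsurv'
    have hkill : ∀ (v : SV n) (c : Fin k), EGLegal (SG n) s v c →
        EGSurvivesGreedy (SG n) (c0 + d) (EGStep s v c) → False := by
      intro v c hleg hs
      rcases Nat.eq_zero_or_pos d with hd0 | hd1
      · subst hd0
        rw [Nat.add_zero] at hs
        exact hbase _ (inv1_step_full hInv hleg (by omega)) hs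
      · obtain ⟨hInv', hcard'⟩ := inv1_step_lt hInv hleg (by omega)
        exact ihd hd1 _ hInv' (by omega) hs
    by_cases hA : s.aliceTurn = true
    · rw [if_pos hA] at hsurv'
      obtain ⟨v, c, hleg, hs⟩ := hsurv'
      exact hkill v c hleg hs
    · rw [if_neg hA] at hsurv'
      obtain ⟨hAll, hB⟩ := hsurv'
      have hnu : s.played ≠ Finset.univ := by
        intro hc2
        rw [hc2, Finset.card_univ, card_SV] at hcard
        omega
      obtain ⟨v, hv⟩ : ∃ v, v ∉ s.played := by
        by_contra hc2
        push_neg at hc2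
        exact hnu (Finset.eq_univ_iff_forall.mpr hc2)
      obtain ⟨c, hc⟩ := hAll v hv
      classical
      have hFne : (Finset.univ.filter (fun c => EGLegal (SG n) s v c)).Nonempty :=
        ⟨c, by simp [hc]⟩
      obtain ⟨c₀, hc₀F, hmin⟩ := Finset.exists_min_image _ id hFne
      have hc₀ : EGLegal (SG n) s v c₀ := by
        simpa using (Finset.mem_filter.mp hc₀F).2
      have hgreedy : EGLegalBobGreedy (SG n) s v c₀ := by
        refine ⟨hc₀, fun c' hlt hP => ?_⟩
        have := hmin c' (by simp [hP])
        exact absurd this (by simpa using hlt)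
      exact hkill v c₀ hc₀ (hB v c₀ hgreedy)


lemma fin2_cover : ∀ b a c : Fin 2, b ≠ a → c ≠ b → c ≠ a → False := by decide

set_option synthInstance.maxSize 512 in
lemma fin3_cover : ∀ b a d c : Fin 3,
    a ≠ b → d ≠ a → d ≠ b → c ≠ b → c ≠ a → c ≠ d → False := by decide

lemma fin3_third : ∀ a b : Fin 3, a ≠ b →
    ∃ d, d ≠ a ∧ d ≠ b ∧ ∀ c, c ≠ a → c ≠ b → c = d := by decide

lemma stuck_full2 (hn1 : 0 < n) {s : EGState (SV n) 2} (hF : FullInv s)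
    (v : SV n) (c : Fin 2) (hleg : EGLegal (SG n) s v c) : False := by
  obtain ⟨b, hb⟩ := Option.ne_none_iff_exists'.mp (hF.2.2.1 (Sum.inl 0))
  obtain ⟨a, ha⟩ := Option.ne_none_iff_exists'.mp (hF.2.2.1 (Sum.inr ⟨0, hn1⟩))
  have hab : b ≠ a := hF.2.2.2 0 ⟨0, hn1⟩ b a hb ha
  cases v with
  | inl x =>
    have h1 : c ≠ b := fun he => hleg.2.1
      (by rw [show (Sum.inl x : SV n) = Sum.inl 0 by rw [fin1_eq x], hb, he])
    have h2 : c ≠ a := fun he =>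
      hleg.2.2 (Sum.inr ⟨0, hn1⟩) (adj_inl_inr x ⟨0, hn1⟩) (by rw [ha, he])
    exact fin2_cover b a c hab h1 h2
  | inr i =>
    obtain ⟨ci, hci⟩ := Option.ne_none_iff_exists'.mp (hF.2.2.1 (Sum.inr i))
    have hbc : b ≠ ci := hF.2.2.2 0 i b ci hb hci
    have h1 : c ≠ ci := fun he => hleg.2.1 (by rw [hci, he])
    have h2 : c ≠ b := fun he =>
      hleg.2.2 (Sum.inl 0) ((adj_inl_inr 0 i).symm) (by rw [hb, he])
    exact fin2_cover b ci c hbc h2 h1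

lemma base2 (hn1 : 0 < n) :
    ∀ s : EGState (SV n) 2, FullInv s → ¬ EGSurvivesGreedy (SG n) 1 s := by
  intro s hF hs
  replace hs : (if s.aliceTurn then
      ∃ v c, EGLegal (SG n) s v c ∧ EGSurvivesGreedy (SG n) 0 (EGStep s v c)
    else
      (∀ v, v ∉ s.played → ∃ c, EGLegal (SG n) s v c) ∧
        ∀ v c, EGLegalBobGreedy (SG n) s v c → EGSurvivesGreedy (SG n) 0 (EGStep s v c)) := hs
  by_cases hA : s.aliceTurn = true
  · rw [if_pos hA] at hs
    obtain ⟨v, c, hleg, _⟩ := hs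
    exact stuck_full2 hn1 hF v c hleg
  · rw [if_neg hA] at hs
    obtain ⟨c, hcleg⟩ := hs.1 (Sum.inl 0) (by rw [hF.2.1]; exact Finset.notMem_empty _)
    exact stuck_full2 hn1 hF (Sum.inl 0) c hcleg

lemma base3 (heven : n % 2 = 0) (h4 : 4 ≤ n) :
    ∀ s : EGState (SV n) 3, FullInv s → ¬ EGSurvivesGreedy (SG n) 4 s := by
  intro s hF hs
  have hn1 : 0 < n := by omega
  have hturn : s.aliceTurn = false := by
    rw [hF.1]
    have : (n + 1) % 2 = 1 := by omega
    simp [this]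
  replace hs : (if s.aliceTurn then
      ∃ v c, EGLegal (SG n) s v c ∧ EGSurvivesGreedy (SG n) 3 (EGStep s v c)
    else
      (∀ v, v ∉ s.played → ∃ c, EGLegal (SG n) s v c) ∧
        ∀ v c, EGLegalBobGreedy (SG n) s v c → EGSurvivesGreedy (SG n) 3 (EGStep s v c)) := hs
  rw [if_neg (by rw [hturn]; simp)] at hs
  obtain ⟨hAll, hB⟩ := hs
  obtain ⟨b, hb⟩ := Option.ne_none_iff_exists'.mp (hF.2.2.1 (Sum.inl 0))
  choose f hf using fun i => Option.ne_none_iff_exists'.mp (hF.2.2.1 (Sum.inr i))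
  have hprop : ∀ i, f i ≠ b := fun i he => hF.2.2.2 0 i b (f i) hb (hf i) he.symm
  by_cases hmono : ∀ i, f i = f ⟨0, hn1⟩
  · -- all leaves share color a
    have hab : f ⟨0, hn1⟩ ≠ b := hprop ⟨0, hn1⟩
    obtain ⟨d, hda, hdb, huni⟩ := fin3_third (f ⟨0, hn1⟩) b hab
    have hleg0 : EGLegal (SG n) s (Sum.inr ⟨0, hn1⟩) d := by
      refine ⟨by rw [hF.2.1]; exact Finset.notMem_empty _, ?_, ?_⟩
      · rw [hf ⟨0, hn1⟩]
        intro he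
        exact hda (Option.some_injective _ he).symm
      · intro u hu
        rw [adj_inr hu, hb]
        intro he
        exact hdb (Option.some_injective _ he).symm
    have hgreedy : EGLegalBobGreedy (SG n) s (Sum.inr ⟨0, hn1⟩) d := by
      refine ⟨hleg0, fun c' hlt hleg' => ?_⟩
      have h1 : c' ≠ f ⟨0, hn1⟩ := fun he => hleg'.2.1 (by rw [hf ⟨0, hn1⟩, he])
      have h2 : c' ≠ b := fun he =>
        hleg'.2.2 (Sum.inl 0) ((adj_inl_inr 0 ⟨0, hn1⟩).symm) (by rw [hb, he])
      rw [huni c' h1 h2] at hlt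
      exact lt_irrefl _ hlt
    have hs1 := hB _ _ hgreedy
    have hpl1 : (EGStep s (Sum.inr ⟨0, hn1⟩) d).played = {Sum.inr ⟨0, hn1⟩} := by
      show (if _ = _ then _ else _) = _
      rw [hF.2.1]
      refine if_neg ?_
      intro hc
      have := Finset.eq_univ_iff_forall.mp hc (Sum.inl 0)
      simp at this
    have hcol1 : ∀ u, u ≠ Sum.inr ⟨0, hn1⟩ →
        (EGStep s (Sum.inr ⟨0, hn1⟩) d).col u = s.col u := by
      intro u hu
      show Function.update s.col _ _ u = _
      rw [Function.update_of_ne hu]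
    have hcol1i : (EGStep s (Sum.inr ⟨0, hn1⟩) d).col (Sum.inr ⟨0, hn1⟩) = some d := by
      show Function.update s.col (Sum.inr ⟨0, hn1⟩) (some d) (Sum.inr ⟨0, hn1⟩) = some d
      rw [Function.update_self]
    have hturn1 : (EGStep s (Sum.inr ⟨0, hn1⟩) d).aliceTurn = true := by
      rw [turn_step, hturn]
      rfl
    replace hs1 : (if (EGStep s (Sum.inr ⟨0, hn1⟩) d).aliceTurn then
        ∃ v c, EGLegal (SG n) (EGStep s (Sum.inr ⟨0, hn1⟩) d) v c ∧
          EGSurvivesGreedy (SG n) 2 (EGStep (EGStep s (Sum.inr ⟨0, hn1⟩) d) v c)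
      else
        (∀ v, v ∉ (EGStep s (Sum.inr ⟨0, hn1⟩) d).played →
          ∃ c, EGLegal (SG n) (EGStep s (Sum.inr ⟨0, hn1⟩) d) v c) ∧
          ∀ v c, EGLegalBobGreedy (SG n) (EGStep s (Sum.inr ⟨0, hn1⟩) d) v c →
            EGSurvivesGreedy (SG n) 2 (EGStep (EGStep s (Sum.inr ⟨0, hn1⟩) d) v c)) := hs1
    rw [if_pos hturn1] at hs1
    obtain ⟨v, c, hleg, hs2⟩ := hs1
    cases v with
    | inl x =>
      exfalso
      have h1 : c ≠ b := fun he => hleg.2.1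
        (by rw [show (Sum.inl x : SV n) = Sum.inl 0 by rw [fin1_eq x],
          hcol1 _ (by simp), hb, he])
      have h2 : c ≠ d := fun he =>
        hleg.2.2 (Sum.inr ⟨0, hn1⟩) (adj_inl_inr x ⟨0, hn1⟩) (by rw [hcol1i, he])
      have hne10 : (⟨1, by omega⟩ : Fin n) ≠ ⟨0, hn1⟩ := by
        intro h
        have := congrArg Fin.val h
        simp at this
      have h3 : c ≠ f ⟨0, hn1⟩ := fun he =>
        hleg.2.2 (Sum.inr ⟨1, by omega⟩) (adj_inl_inr x ⟨1, by omega⟩)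
          (by rw [hcol1 _ (by simp [hne10]), hf ⟨1, by omega⟩, hmono ⟨1, by omega⟩, he])
      exact fin3_cover b (f ⟨0, hn1⟩) d c hab hda hdb h1 h3 h2
    | inr i =>
      have hii0 : i ≠ ⟨0, hn1⟩ := by
        intro h
        have := hleg.1
        rw [hpl1, h] at this
        simp at this
      have hcd : c = d := by
        have h1 : c ≠ f ⟨0, hn1⟩ := fun he => hleg.2.1
          (by rw [hcol1 _ (by simp [hii0]), hf i, hmono i, he])
        have h2 : c ≠ b := fun he =>
          hleg.2.2 (Sum.inl 0) ((adj_inl_inr 0 i).symm)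
            (by rw [hcol1 _ (by simp), hb, he])
        exact huni c h1 h2
      subst hcd
      have hpl2 : (EGStep (EGStep s (Sum.inr ⟨0, hn1⟩) c) (Sum.inr i) c).played =
          insert (Sum.inr i) {Sum.inr ⟨0, hn1⟩} := by
        show (if _ = _ then _ else _) = _
        rw [hpl1]
        refine if_neg ?_
        intro hc2
        have := Finset.eq_univ_iff_forall.mp hc2 (Sum.inl 0)
        simp at this
      have hturn2 : (EGStep (EGStep s (Sum.inr ⟨0, hn1⟩) c) (Sum.inr i) c).aliceTurn
          = false := by
        rw [turn_step, hturn1]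
        rfl
      replace hs2 : (if (EGStep (EGStep s (Sum.inr ⟨0, hn1⟩) c) (Sum.inr i) c).aliceTurn then
          ∃ v' c', EGLegal (SG n) (EGStep (EGStep s (Sum.inr ⟨0, hn1⟩) c) (Sum.inr i) c) v' c' ∧
            EGSurvivesGreedy (SG n) 1
              (EGStep (EGStep (EGStep s (Sum.inr ⟨0, hn1⟩) c) (Sum.inr i) c) v' c')
        else
          (∀ v', v' ∉ (EGStep (EGStep s (Sum.inr ⟨0, hn1⟩) c) (Sum.inr i) c).played →
            ∃ c', EGLegal (SG n) (EGStep (EGStep s (Sum.inr ⟨0, hn1⟩) c) (Sum.inr i) c) v' c') ∧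
            ∀ v' c', EGLegalBobGreedy (SG n)
                (EGStep (EGStep s (Sum.inr ⟨0, hn1⟩) c) (Sum.inr i) c) v' c' →
              EGSurvivesGreedy (SG n) 1
                (EGStep (EGStep (EGStep s (Sum.inr ⟨0, hn1⟩) c) (Sum.inr i) c) v' c')) := hs2
      rw [if_neg (by rw [hturn2]; simp)] at hs2
      obtain ⟨hAll2, _⟩ := hs2
      obtain ⟨c', hc'⟩ := hAll2 (Sum.inl 0) (by rw [hpl2]; simp)
      obtain ⟨j, hji, hji0⟩ : ∃ j : Fin n, j ≠ i ∧ j ≠ ⟨0, hn1⟩ := by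
        by_contra hc2
        push_neg at hc2
        have hsub : (Finset.univ : Finset (Fin n)) ⊆ {i, ⟨0, hn1⟩} := by
          intro j _
          simp only [Finset.mem_insert, Finset.mem_singleton]
          by_cases h1 : j = i
          · exact Or.inl h1
          · exact Or.inr (hc2 j h1)
        have hcard := Finset.card_le_card hsub
        rw [Finset.card_univ, Fintype.card_fin] at hcard
        have h2 : ({i, ⟨0, hn1⟩} : Finset (Fin n)).card ≤ 2 := by
          apply le_trans (Finset.card_insert_le _ _)
          simp
        omega
      have hcolb2 : (EGStep (EGStep s (Sum.inr ⟨0, hn1⟩) c) (Sum.inr i) c).col (Sum.inl 0)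
          = some b := by
        show Function.update (EGStep s (Sum.inr ⟨0, hn1⟩) c).col (Sum.inr i) (some c)
          (Sum.inl 0) = some b
        rw [Function.update_of_ne (by simp), hcol1 _ (by simp), hb]
      have hcoli0 : (EGStep (EGStep s (Sum.inr ⟨0, hn1⟩) c) (Sum.inr i) c).col
          (Sum.inr ⟨0, hn1⟩) = some c := by
        show Function.update (EGStep s (Sum.inr ⟨0, hn1⟩) c).col (Sum.inr i) (some c)
          (Sum.inr ⟨0, hn1⟩) = some c
        rw [Function.update_of_ne (by simp only [ne_eq, Sum.inr.injEq]; exact fun hh => hii0 hh.symm), hcol1i]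
      have hcolj : (EGStep (EGStep s (Sum.inr ⟨0, hn1⟩) c) (Sum.inr i) c).col
          (Sum.inr j) = some (f ⟨0, hn1⟩) := by
        show Function.update (EGStep s (Sum.inr ⟨0, hn1⟩) c).col (Sum.inr i) (some c)
          (Sum.inr j) = some (f ⟨0, hn1⟩)
        rw [Function.update_of_ne (by simp [hji]), hcol1 _ (by simp [hji0]),
          hf j, hmono j]
      have h1 : c' ≠ b := fun he => hc'.2.1 (by rw [hcolb2, he])
      have h2 : c' ≠ c := fun he =>
        hc'.2.2 (Sum.inr ⟨0, hn1⟩) (adj_inl_inr 0 ⟨0, hn1⟩) (by rw [hcoli0, he])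
      have h3 : c' ≠ f ⟨0, hn1⟩ := fun he =>
        hc'.2.2 (Sum.inr j) (adj_inl_inr 0 j) (by rw [hcolj, he])
      exact fin3_cover b (f ⟨0, hn1⟩) c c' hab hda hdb h1 h3 h2
  · -- leaves are not monochromatic: the centre is stuck
    push_neg at hmono
    obtain ⟨j, hj⟩ := hmono
    obtain ⟨c, hcleg⟩ := hAll (Sum.inl 0) (by rw [hF.2.1]; exact Finset.notMem_empty _)
    have h1 : c ≠ b := fun he => hcleg.2.1 (by rw [hb, he])
    have h2 : c ≠ f ⟨0, hn1⟩ := fun he =>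
      hcleg.2.2 (Sum.inr ⟨0, hn1⟩) (adj_inl_inr 0 ⟨0, hn1⟩) (by rw [hf ⟨0, hn1⟩, he])
    have h3 : c ≠ f j := fun he =>
      hcleg.2.2 (Sum.inr j) (adj_inl_inr 0 j) (by rw [hf j, he])
    exact fin3_cover b (f ⟨0, hn1⟩) (f j) c (hprop ⟨0, hn1⟩) hj (hprop j) h1 h2 h3

lemma no_win0 : ¬ AliceWinsEGGreedy (SG n) 0 := by
  intro h
  have h1 : ∃ (v : SV n) (c : Fin 0), EGLegal (SG n) (EGInit (SV n) 0) v c ∧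
      EGSurvivesGreedy (SG n) 0 (EGStep (EGInit (SV n) 0) v c) := h 1
  obtain ⟨v, c, _⟩ := h1
  exact c.elim0

lemma no_win1 (hn1 : 0 < n) : ¬ AliceWinsEGGreedy (SG n) 1 := by
  intro h
  have h2 : ∃ (v : SV n) (c : Fin 1), EGLegal (SG n) (EGInit (SV n) 1) v c ∧
      EGSurvivesGreedy (SG n) 1 (EGStep (EGInit (SV n) 1) v c) := h 2
  obtain ⟨v, c, hleg, hs⟩ := h2
  replace hs : (∀ u, u ∉ (EGStep (EGInit (SV n) 1) v c).played →
      ∃ c', EGLegal (SG n) (EGStep (EGInit (SV n) 1) v c) u c') ∧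
      ∀ u c', EGLegalBobGreedy (SG n) (EGStep (EGInit (SV n) 1) v c) u c' →
        EGSurvivesGreedy (SG n) 0 (EGStep (EGStep (EGInit (SV n) 1) v c) u c') := hs
  obtain ⟨hAll, _⟩ := hs
  have hpl : (EGStep (EGInit (SV n) 1) v c).played = {v} := by
    show (if insert v (EGInit (SV n) 1).played = Finset.univ then ∅
      else insert v (EGInit (SV n) 1).played) = {v}
    refine if_neg ?_
    intro hc
    have hcard := congrArg Finset.card hc
    rw [Finset.card_univ, card_SV] at hcard
    have h1 : (insert v (EGInit (SV n) 1).played).card ≤ 1 := by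
      apply le_trans (Finset.card_insert_le _ _)
      simp [EGInit]
    omega
  cases v with
  | inl x =>
    obtain ⟨c', hc'⟩ := hAll (Sum.inr ⟨0, hn1⟩) (by rw [hpl]; simp)
    apply hc'.2.2 (Sum.inl 0) ((adj_inl_inr 0 ⟨0, hn1⟩).symm)
    show Function.update _ _ _ _ = _
    rw [show (Sum.inl 0 : SV n) = Sum.inl x by rw [fin1_eq x]]
    simp
    exact (Subsingleton.elim c' c).symm ▸ rfl
  | inr i =>
    obtain ⟨c', hc'⟩ := hAll (Sum.inl 0) (by rw [hpl]; simp)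
    apply hc'.2.2 (Sum.inr i) (adj_inl_inr 0 i)
    show Function.update _ _ _ _ = _
    simp
    exact (Subsingleton.elim c' c).symm ▸ rfl

lemma no_win2 (hn1 : 0 < n) : ¬ AliceWinsEGGreedy (SG n) 2 := by
  intro h
  have hd := doom_round1 (base2 hn1) (n + 1) (by omega) (EGInit (SV n) 2)
    inv1_init (by simp [EGInit])
  exact hd (h (1 + (n + 1)))

lemma no_win3 (heven : n % 2 = 0) (h4 : 4 ≤ n) : ¬ AliceWinsEGGreedy (SG n) 3 := by
  intro h
  have hd := doom_round1 (base3 heven h4) (n + 1) (by omega) (EGInit (SV n) 3)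
    inv1_init (by simp [EGInit])
  exact hd (h (4 + (n + 1)))

end StarProof

/-- For stars: χ_g^{∞2}(K_{1,n}) = 3 if n is odd, and = 4 if n ≥ 4 is even. -/
theorem eternal_greedy_game_chromatic_star (n : ℕ) :
    (Odd n → IsLeast {k | AliceWinsEGGreedy (completeBipartiteGraph (Fin 1) (Fin n)) k} 3) ∧
    (Even n → 4 ≤ n →
      IsLeast {k | AliceWinsEGGreedy (completeBipartiteGraph (Fin 1) (Fin n)) k} 4) := by
  constructor
  · intro hodd
    constructor
    · exact StarProof.aliceWins_odd3 hodd
    · intro k hk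
      by_contra hlt
      push_neg at hlt
      interval_cases k
      · exact StarProof.no_win0 hk
      · exact StarProof.no_win1 hodd.pos hk
      · exact StarProof.no_win2 hodd.pos hk
  · intro heven h4
    constructor
    · exact StarProof.aliceWins_even4 (by omega) (Nat.even_iff.mp heven)
    · intro k hk
      by_contra hlt
      push_neg at hlt
      interval_cases k
      · exact StarProof.no_win0 hk
      · exact StarProof.no_win1 (by omega) hk
      · exact StarProof.no_win2 (by omega) hk
      · exact StarProof.no_win3 (Nat.even_iff.mp heven) h4 hk
end
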